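/- arXiv:2403.16284 — 14 statements merged into one kernel-verified Lean document; each statement's English description precedes it below -/
import Mathlib

section
/- Let k_1, k_2 ≥ 1 be natural numbers. In ℤ_{k_1k_2}, the sets B_1 = {0, 1, 2, …, k_1−1} and B_2 = {0, k_1, 2k_1, …, k_1(k_2−1)} satisfy Δ(B_1,B_2) = ℤ_{k_1k_2} and Δ(B_2,B_1) = ℤ_{k_1k_2} as multisets (each element of ℤ_{k_1k_2} occurs exactly once in each difference multiset); in particular {B_1, B_2} forms a non-disjoint (k_1k_2, 2, k_1, k_2)-GPSEDF in ℤ_{k_1k_2}. -/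
/-- The external difference multiset `Δ(A,B) = {a - b : a ∈ A, b ∈ B}` (with multiplicity). -/
def extDiff {G : Type*} [AddGroup G] (A B : Finset G) : Multiset G :=
  A.val.bind fun a => B.val.map fun b => a - b

lemma extDiff_eq_map {G : Type*} [AddGroup G] (A B : Finset G) :
    extDiff A B = (A ×ˢ B).val.map (fun p => p.1 - p.2) := by
  rw [extDiff, Finset.product_val]
  show _ = Multiset.map _ (A.val.bind fun a => B.val.map (Prod.mk a))
  rw [Multiset.map_bind]
  simp [Multiset.map_map, Function.comp]

lemma natCast_inj_of_lt {n a b : ℕ} [NeZero n] (ha : a < n) (hb : b < n)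
    (h : (a : ZMod n) = b) : a = b := by
  rw [← ZMod.val_cast_of_lt ha, ← ZMod.val_cast_of_lt hb, h]

lemma key_lemma (k₁ k₂ : ℕ) (h₁ : 1 ≤ k₁) (h₂ : 1 ≤ k₂) [NeZero (k₁ * k₂)]
    {i i' j j' : ℕ} (hi : i < k₁) (hi' : i' < k₁) (hj : j < k₂) (hj' : j' < k₂)
    (h : ((i + j' * k₁ : ℕ) : ZMod (k₁ * k₂)) = ((i' + j * k₁ : ℕ) : ZMod (k₁ * k₂))) :
    i = i' ∧ j = j' := by
  have hb : ∀ {a b : ℕ}, a < k₁ → b < k₂ → a + b * k₁ < k₁ * k₂ := by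
    intro a b ha hbb
    calc a + b * k₁ < k₁ + b * k₁ := by omega
    _ ≤ k₁ + (k₂ - 1) * k₁ := by
        have : b ≤ k₂ - 1 := by omega
        exact Nat.add_le_add_left (Nat.mul_le_mul_right _ this) _
    _ = k₂ * k₁ := by
        have hle : k₁ ≤ k₂ * k₁ := Nat.le_mul_of_pos_left k₁ (by omega : 0 < k₂)
        rw [Nat.sub_one_mul]
        omega
    _ = k₁ * k₂ := Nat.mul_comm _ _
  have heq : i + j' * k₁ = i' + j * k₁ :=
    natCast_inj_of_lt (hb hi hj') (hb hi' hj) h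
  have hmod : i = i' := by
    have := congrArg (· % k₁) heq
    simpa [Nat.add_mul_mod_self_right, Nat.mod_eq_of_lt hi, Nat.mod_eq_of_lt hi'] using this
  refine ⟨hmod, ?_⟩
  subst hmod
  have : j' * k₁ = j * k₁ := by omega
  exact (Nat.eq_of_mul_eq_mul_right (by omega) this).symm

/-- In `ℤ_{k₁k₂}`, the sets `B₁ = {0,…,k₁-1}` and `B₂ = {0,k₁,…,k₁(k₂-1)}`
satisfy `Δ(B₁,B₂) = Δ(B₂,B₁) = ℤ_{k₁k₂}` (each element occurring exactly once), so
`{B₁, B₂}` is a non-disjoint `(k₁k₂, 2, k₁, k₂)`-GPSEDF. -/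
theorem stmt_1 (k₁ k₂ : ℕ) (h₁ : 1 ≤ k₁) (h₂ : 1 ≤ k₂) :
    haveI : NeZero (k₁ * k₂) := ⟨(Nat.mul_pos h₁ h₂).ne'⟩
    let B₁ : Finset (ZMod (k₁ * k₂)) :=
      (Finset.range k₁).image (fun i : ℕ => (i : ZMod (k₁ * k₂)))
    let B₂ : Finset (ZMod (k₁ * k₂)) :=
      (Finset.range k₂).image (fun i : ℕ => ((i * k₁ : ℕ) : ZMod (k₁ * k₂)))
    B₁.card = k₁ ∧ B₂.card = k₂ ∧
      extDiff B₁ B₂ = (Finset.univ : Finset (ZMod (k₁ * k₂))).val ∧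
      extDiff B₂ B₁ = (Finset.univ : Finset (ZMod (k₁ * k₂))).val := by
  haveI : NeZero (k₁ * k₂) := ⟨(Nat.mul_pos h₁ h₂).ne'⟩
  intro B₁ B₂
  have hn : 0 < k₁ * k₂ := Nat.mul_pos h₁ h₂
  -- memberships
  have hmem₁ : ∀ a ∈ B₁, ∃ i : ℕ, i < k₁ ∧ a = (i : ZMod (k₁ * k₂)) := by
    intro a ha
    simp only [B₁, Finset.mem_image, Finset.mem_range] at ha
    obtain ⟨i, hi, rfl⟩ := ha
    exact ⟨i, hi, rfl⟩
  have hmem₂ : ∀ a ∈ B₂, ∃ j : ℕ, j < k₂ ∧ a = ((j * k₁ : ℕ) : ZMod (k₁ * k₂)) := by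
    intro a ha
    simp only [B₂, Finset.mem_image, Finset.mem_range] at ha
    obtain ⟨j, hj, rfl⟩ := ha
    exact ⟨j, hj, rfl⟩
  -- cardinalities
  have hcard₁ : B₁.card = k₁ := by
    rw [Finset.card_image_of_injOn, Finset.card_range]
    intro a ha b hb h
    simp only [Finset.mem_coe, Finset.mem_range] at ha hb
    exact natCast_inj_of_lt (lt_of_lt_of_le ha (Nat.le_mul_of_pos_right _ h₂))
      (lt_of_lt_of_le hb (Nat.le_mul_of_pos_right _ h₂)) h
  have hcard₂ : B₂.card = k₂ := by
    rw [Finset.card_image_of_injOn, Finset.card_range]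
    intro a ha b hb h
    simp only [Finset.mem_coe, Finset.mem_range] at ha hb
    have ha' : a * k₁ < k₁ * k₂ := by
      rw [Nat.mul_comm k₁ k₂]; exact (Nat.mul_lt_mul_right h₁).mpr ha
    have hb' : b * k₁ < k₁ * k₂ := by
      rw [Nat.mul_comm k₁ k₂]; exact (Nat.mul_lt_mul_right h₁).mpr hb
    have := natCast_inj_of_lt ha' hb' h
    exact Nat.eq_of_mul_eq_mul_right h₁ this
  refine ⟨hcard₁, hcard₂, ?_, ?_⟩
  · -- Δ(B₁, B₂) = univ
    have hinj : Set.InjOn (fun p : ZMod (k₁ * k₂) × ZMod (k₁ * k₂) => p.1 - p.2)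
        (B₁ ×ˢ B₂ : Finset _) := by
      rintro ⟨a, b⟩ hab ⟨a', b'⟩ hab' h
      simp only [Finset.coe_product, Set.mem_prod, Finset.mem_coe] at hab hab'
      obtain ⟨i, hi, rfl⟩ := hmem₁ a hab.1
      obtain ⟨j, hj, rfl⟩ := hmem₂ b hab.2
      obtain ⟨i', hi', rfl⟩ := hmem₁ a' hab'.1
      obtain ⟨j', hj', rfl⟩ := hmem₂ b' hab'.2
      simp only at h
      have h' : ((i + j' * k₁ : ℕ) : ZMod (k₁ * k₂)) = ((i' + j * k₁ : ℕ) : ZMod (k₁ * k₂)) := by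
        push_cast at h ⊢
        linear_combination h
      obtain ⟨rfl, rfl⟩ := key_lemma k₁ k₂ h₁ h₂ hi hi' hj hj' h'
      rfl
    have hnd : (extDiff B₁ B₂).Nodup := by
      rw [extDiff_eq_map]
      exact Multiset.Nodup.map_on (fun x hx y hy h => hinj hx hy h) (B₁ ×ˢ B₂).nodup
    have : (⟨extDiff B₁ B₂, hnd⟩ : Finset (ZMod (k₁ * k₂))) = Finset.univ := by
      apply Finset.eq_univ_of_card
      show Multiset.card (extDiff B₁ B₂) = _
      rw [extDiff_eq_map, Multiset.card_map, ← Finset.card_def, Finset.card_product,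
        hcard₁, hcard₂, ZMod.card]
    exact congrArg Finset.val this
  · -- Δ(B₂, B₁) = univ
    have hinj : Set.InjOn (fun p : ZMod (k₁ * k₂) × ZMod (k₁ * k₂) => p.1 - p.2)
        (B₂ ×ˢ B₁ : Finset _) := by
      rintro ⟨a, b⟩ hab ⟨a', b'⟩ hab' h
      simp only [Finset.coe_product, Set.mem_prod, Finset.mem_coe] at hab hab'
      obtain ⟨j, hj, rfl⟩ := hmem₂ a hab.1
      obtain ⟨i, hi, rfl⟩ := hmem₁ b hab.2
      obtain ⟨j', hj', rfl⟩ := hmem₂ a' hab'.1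
      obtain ⟨i', hi', rfl⟩ := hmem₁ b' hab'.2
      simp only at h
      have h' : ((i' + j * k₁ : ℕ) : ZMod (k₁ * k₂)) = ((i + j' * k₁ : ℕ) : ZMod (k₁ * k₂)) := by
        push_cast at h ⊢
        linear_combination h
      obtain ⟨rfl, rfl⟩ := key_lemma k₁ k₂ h₁ h₂ hi' hi hj' hj h'
      rfl
    have hnd : (extDiff B₂ B₁).Nodup := by
      rw [extDiff_eq_map]
      exact Multiset.Nodup.map_on (fun x hx y hy h => hinj hx hy h) (B₂ ×ˢ B₁).nodup
    have : (⟨extDiff B₂ B₁, hnd⟩ : Finset (ZMod (k₁ * k₂))) = Finset.univ := by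
      apply Finset.eq_univ_of_card
      show Multiset.card (extDiff B₂ B₁) = _
      rw [extDiff_eq_map, Multiset.card_map, ← Finset.card_def, Finset.card_product,
        hcard₁, hcard₂, ZMod.card, Nat.mul_comm]
    exact congrArg Finset.val this
end

section
/- Let G be an abelian group of order v, let m ≥ 3 and k ≥ 1. Then there does not exist a classical (v,m,k,λ)-PSEDF in G, i.e. there is no family of m pairwise disjoint k-subsets A_1, …, A_m of G such that Δ(A_i,A_j) = λ(G∖{0}) as multisets for all i ≠ j. -/
namespace PSEDFaux

variable {G : Type*} [AddCommGroup G] [Fintype G] [DecidableEq G]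

set_option linter.unusedSectionVars false

/-- pointwise difference count -/
def Scnt (B C : Finset G) (g : G) : ℕ := ∑ a ∈ B, ∑ c ∈ C, if a - c = g then 1 else 0

lemma Scnt_eq (B C : Finset G) (g : G) : (extDiff B C).count g = Scnt B C g := by
  unfold extDiff Scnt
  rw [Multiset.count_bind, Finset.sum_eq_multiset_sum]
  congr 1
  apply Multiset.map_congr rfl
  intro a _
  rw [Multiset.count_map]
  rw [Finset.sum_boole]
  simp only [Finset.filter_val, Nat.cast_id]
  congr 1
  apply Multiset.filter_congr
  intro c _
  exact ⟨fun h => h.symm, fun h => h.symm⟩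

lemma Scnt_sum (B C : Finset G) : ∑ g : G, Scnt B C g = B.card * C.card := by
  unfold Scnt
  rw [Finset.sum_comm]
  have h : ∀ a : G, ∑ g : G, ∑ c ∈ C, (if a - c = g then (1:ℕ) else 0) = C.card := by
    intro a
    rw [Finset.sum_comm]
    simp [Finset.sum_ite_eq]
  calc ∑ a ∈ B, ∑ g : G, ∑ c ∈ C, (if a - c = g then (1:ℕ) else 0)
      = ∑ _a ∈ B, C.card := Finset.sum_congr rfl fun a _ => h a
    _ = B.card * C.card := by simp [mul_comm]

lemma Scnt_self (B : Finset G) : Scnt B B 0 = B.card := by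
  unfold Scnt
  simp [sub_eq_zero, Finset.sum_ite_eq]

lemma collapse (b c d e w : G) :
    ∑ x : G, (if b - c = x then (1:ℕ) else 0) * (if d - e = w - x then 1 else 0)
      = if b - c + (d - e) = w then 1 else 0 := by
  rw [Finset.sum_eq_single (b - c)]
  · rw [if_pos rfl, one_mul]
    have : (d - e = w - (b - c)) ↔ (b - c + (d - e) = w) := by
      constructor
      · intro h; rw [h]; abel
      · intro h; rw [← h]; abel
    simp [this]
  · intro x _ hx
    rw [if_neg (fun h => hx h.symm), zero_mul]
  · intro h; exact absurd (Finset.mem_univ _) h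

lemma Lconv (B C D E : Finset G) (w : G) :
    ∑ x : G, Scnt B C x * Scnt D E (w - x)
      = ∑ b ∈ B, ∑ c ∈ C, ∑ d ∈ D, ∑ e ∈ E, if b - c + (d - e) = w then (1:ℕ) else 0 := by
  have step1 : ∀ x : G, Scnt B C x * Scnt D E (w - x)
      = ∑ b ∈ B, ∑ c ∈ C, ∑ d ∈ D, ∑ e ∈ E,
          (if b - c = x then (1:ℕ) else 0) * (if d - e = w - x then 1 else 0) := by
    intro x
    unfold Scnt
    rw [Finset.sum_mul_sum]
    refine Finset.sum_congr rfl fun b _ => ?_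
    rw [Finset.sum_comm]
    refine Finset.sum_congr rfl fun c _ => ?_
    rw [Finset.sum_mul_sum]
  calc ∑ x : G, Scnt B C x * Scnt D E (w - x)
      = ∑ x : G, ∑ b ∈ B, ∑ c ∈ C, ∑ d ∈ D, ∑ e ∈ E,
          (if b - c = x then (1:ℕ) else 0) * (if d - e = w - x then 1 else 0) :=
        Finset.sum_congr rfl fun x _ => step1 x
    _ = ∑ b ∈ B, ∑ c ∈ C, ∑ d ∈ D, ∑ e ∈ E, if b - c + (d - e) = w then (1:ℕ) else 0 := by
        rw [Finset.sum_comm]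
        refine Finset.sum_congr rfl fun b _ => ?_
        rw [Finset.sum_comm]
        refine Finset.sum_congr rfl fun c _ => ?_
        rw [Finset.sum_comm]
        refine Finset.sum_congr rfl fun d _ => ?_
        rw [Finset.sum_comm]
        refine Finset.sum_congr rfl fun e _ => ?_
        exact collapse b c d e w

lemma sum_rot {α β γ M : Type*} [AddCommMonoid M] (s : Finset α) (t : Finset β) (u : Finset γ)
    (f : α → β → γ → M) :
    ∑ a ∈ s, ∑ b ∈ t, ∑ c ∈ u, f a b c = ∑ c ∈ u, ∑ b ∈ t, ∑ a ∈ s, f a b c := by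
  calc ∑ a ∈ s, ∑ b ∈ t, ∑ c ∈ u, f a b c
      = ∑ b ∈ t, ∑ a ∈ s, ∑ c ∈ u, f a b c := Finset.sum_comm
    _ = ∑ b ∈ t, ∑ c ∈ u, ∑ a ∈ s, f a b c :=
        Finset.sum_congr rfl fun _ _ => Finset.sum_comm
    _ = ∑ c ∈ u, ∑ b ∈ t, ∑ a ∈ s, f a b c := Finset.sum_comm

lemma swapMix (B C D E : Finset G) (w : G) :
    ∑ x : G, Scnt B C x * Scnt D E (w - x) = ∑ x : G, Scnt B E x * Scnt D C (w - x) := by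
  rw [Lconv, Lconv]
  refine Finset.sum_congr rfl fun b _ => ?_
  rw [sum_rot]
  refine Finset.sum_congr rfl fun e _ => Finset.sum_congr rfl fun d _ =>
    Finset.sum_congr rfl fun c _ => ?_
  have h : b - c + (d - e) = b - e + (d - c) := by abel
  rw [h]

end PSEDFaux

open PSEDFaux in
/-- In an abelian group of order `v` there is no classical
`(v,m,k,λ)`-PSEDF with `m ≥ 3` (and `k ≥ 1`): there is no family of `m` pairwise disjoint
`k`-subsets `A₁,…,A_m` with `Δ(Aᵢ,Aⱼ) = λ(G∖{0})` for all `i ≠ j`. -/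
theorem stmt_2 {G : Type*} [AddCommGroup G] [Fintype G] [DecidableEq G]
    (v m k : ℕ) (hv : Fintype.card G = v) (hm : 3 ≤ m) (hk : 1 ≤ k) :
    ¬ ∃ (lam : ℕ) (A : Fin m → Finset G),
        (∀ i j, i ≠ j → Disjoint (A i) (A j)) ∧
        (∀ i, (A i).card = k) ∧
        (∀ i j, i ≠ j →
          extDiff (A i) (A j) = lam • ((Finset.univ : Finset G).erase 0).val) := by
  rintro ⟨L, A, -, hcard, hdiff⟩
  -- three distinct indices
  have h0 : 0 < m := by omega
  have h1 : 1 < m := by omega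
  have h2 : 2 < m := by omega
  set i1 : Fin m := ⟨0, h0⟩ with hi1
  set i2 : Fin m := ⟨1, h1⟩ with hi2
  set i3 : Fin m := ⟨2, h2⟩ with hi3
  have h12 : i1 ≠ i2 := by intro h; simpa [hi1, hi2] using congrArg Fin.val h
  have h21 : i2 ≠ i1 := h12.symm
  have h31 : i3 ≠ i1 := by intro h; simpa [hi1, hi3] using congrArg Fin.val h
  have h23 : i2 ≠ i3 := by intro h; simpa [hi2, hi3] using congrArg Fin.val h
  -- pointwise difference counts for distinct indices
  have hS : ∀ i j : Fin m, i ≠ j → ∀ g : G,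
      Scnt (A i) (A j) g = if g = 0 then 0 else L := by
    intro i j hij g
    rw [← Scnt_eq, hdiff i j hij, Multiset.count_nsmul,
        Multiset.count_eq_of_nodup (Finset.nodup _)]
    have hmem : (g ∈ (((Finset.univ : Finset G).erase 0)).val) ↔ ¬ g = 0 := by
      rw [Finset.mem_val, Finset.mem_erase]
      simp
    simp only [hmem]
    by_cases hg : g = 0 <;> simp [hg]
  set r0 : ℕ := ((Finset.univ : Finset G).erase 0).card with hr0
  have hsum0 : ∑ g : G, (if g = (0:G) then 0 else L) = r0 * L := by
    rw [← Finset.sum_erase_add _ _ (Finset.mem_univ (0:G)), if_pos rfl, add_zero,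
        Finset.sum_congr rfl (fun g hg => if_neg (Finset.mem_erase.1 hg).1),
        Finset.sum_const, smul_eq_mul]
  have kk : k * k = L * r0 := by
    have h1 := Scnt_sum (A i1) (A i2)
    rw [hcard, hcard] at h1
    rw [← h1, Finset.sum_congr rfl (fun g _ => hS i1 i2 h12 g), hsum0, mul_comm]
  have hL1 : 1 ≤ L := by
    rcases Nat.eq_zero_or_pos L with h | h
    · rw [h, zero_mul] at kk
      rcases Nat.mul_eq_zero.mp kk with h' | h' <;> omega
    · exact h
  have hr0pos : 1 ≤ r0 := by
    rcases Nat.eq_zero_or_pos r0 with h | h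
    · rw [h, mul_zero] at kk
      rcases Nat.mul_eq_zero.mp kk with h' | h' <;> omega
    · exact h
  set r1 : ℕ := r0 - 1 with hr1
  have hr01 : r1 + 1 = r0 := by omega
  have hR : ∀ w : G, (((Finset.univ : Finset G).erase 0).erase w).card
      = if w = 0 then r0 else r1 := by
    intro w
    by_cases hw : w = 0
    · rw [hw, if_pos rfl, Finset.erase_idem]
    · rw [if_neg hw,
        Finset.card_erase_of_mem (Finset.mem_erase.2 ⟨hw, Finset.mem_univ w⟩)]
  have evalCross : ∀ w : G,
      ∑ x : G, (if x = (0:G) then 0 else L) * (if w - x = 0 then 0 else L)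
        = (L * L) * (if w = 0 then r0 else r1) := by
    intro w
    rw [← hR w]
    have hterm : ∀ x : G, (if x = (0:G) then 0 else L) * (if w - x = 0 then 0 else L)
        = if x ∈ (((Finset.univ : Finset G).erase 0).erase w) then L * L else 0 := by
      intro x
      by_cases hx0 : x = 0
      · simp [hx0]
      · by_cases hxw : x = w
        · subst hxw
          simp [hx0, sub_self]
        · have hsub : w - x ≠ 0 := sub_ne_zero.2 (Ne.symm hxw)
          simp [hx0, hxw, hsub, Finset.mem_erase]
    rw [Finset.sum_congr rfl (fun x _ => hterm x), Finset.sum_ite_mem, Finset.univ_inter,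
        Finset.sum_const, smul_eq_mul, mul_comm]
  -- the inner pair evaluation (via the swap identity)
  have QA : ∀ z : G, ∑ x : G, Scnt (A i1) (A i1) x * Scnt (A i2) (A i2) ((0 - z) - x)
      = (L * L) * (if z = 0 then r0 else r1) := by
    intro z
    rw [swapMix (A i1) (A i1) (A i2) (A i2) (0 - z),
      Finset.sum_congr rfl (fun x _ => by
        rw [hS i1 i2 h12 x, hS i2 i1 h21 ((0 - z) - x)]),
      evalCross (0 - z)]
    simp only [zero_sub, neg_eq_zero]
  -- Evaluation A of the 6-fold sum
  have TA : ∑ z : G, Scnt (A i3) (A i3) z *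
        (∑ x : G, Scnt (A i1) (A i1) x * Scnt (A i2) (A i2) ((0 - z) - x))
      = k * (L * L) + (k * k) * ((L * L) * r1) := by
    rw [Finset.sum_congr rfl (fun z _ => by rw [QA z])]
    have hterm : ∀ z : G,
        Scnt (A i3) (A i3) z * ((L * L) * (if z = 0 then r0 else r1))
        = (if z = (0:G) then Scnt (A i3) (A i3) z * (L * L) else 0)
          + Scnt (A i3) (A i3) z * ((L * L) * r1) := by
      intro z
      by_cases h : z = 0
      · rw [if_pos h, if_pos h, ← hr01]; ring
      · rw [if_neg h, if_neg h, zero_add]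
    rw [Finset.sum_congr rfl (fun z _ => hterm z), Finset.sum_add_distrib]
    congr 1
    · rw [Fintype.sum_ite_eq' (0:G) (fun z => Scnt (A i3) (A i3) z * (L * L)),
        Scnt_self, hcard]
    · rw [← Finset.sum_mul, Scnt_sum, hcard]
  -- Evaluation B of the same 6-fold sum
  have TB : ∑ z : G, Scnt (A i3) (A i3) z *
        (∑ x : G, Scnt (A i1) (A i1) x * Scnt (A i2) (A i2) ((0 - z) - x))
      = r0 * (L * ((L * L) * r1)) := by
    calc ∑ z : G, Scnt (A i3) (A i3) z *
          (∑ x : G, Scnt (A i1) (A i1) x * Scnt (A i2) (A i2) ((0 - z) - x))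
        = ∑ z : G, Scnt (A i3) (A i3) z *
            (∑ x : G, Scnt (A i1) (A i2) x * Scnt (A i2) (A i1) ((0 - z) - x)) :=
          Finset.sum_congr rfl fun z _ => by
            rw [swapMix (A i1) (A i1) (A i2) (A i2) (0 - z)]
      _ = ∑ z : G, ∑ x : G, Scnt (A i3) (A i3) z *
            (Scnt (A i1) (A i2) x * Scnt (A i2) (A i1) ((0 - z) - x)) :=
          Finset.sum_congr rfl fun z _ => Finset.mul_sum _ _ _
      _ = ∑ x : G, ∑ z : G, Scnt (A i3) (A i3) z *
            (Scnt (A i1) (A i2) x * Scnt (A i2) (A i1) ((0 - z) - x)) := Finset.sum_comm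
      _ = ∑ x : G, ∑ z : G, Scnt (A i1) (A i2) x *
            (Scnt (A i3) (A i3) z * Scnt (A i2) (A i1) ((0 - x) - z)) := by
          refine Finset.sum_congr rfl fun x _ => Finset.sum_congr rfl fun z _ => ?_
          rw [sub_right_comm]; ring
      _ = ∑ x : G, Scnt (A i1) (A i2) x *
            (∑ z : G, Scnt (A i3) (A i3) z * Scnt (A i2) (A i1) ((0 - x) - z)) :=
          Finset.sum_congr rfl fun x _ => (Finset.mul_sum _ _ _).symm
      _ = ∑ x : G, Scnt (A i1) (A i2) x *
            (∑ z : G, Scnt (A i3) (A i1) z * Scnt (A i2) (A i3) ((0 - x) - z)) :=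
          Finset.sum_congr rfl fun x _ => by
            rw [swapMix (A i3) (A i3) (A i2) (A i1) (0 - x)]
      _ = ∑ x : G, (if x = (0:G) then 0 else L) * ((L * L) * (if x = 0 then r0 else r1)) := by
          refine Finset.sum_congr rfl fun x _ => ?_
          rw [hS i1 i2 h12 x]
          congr 1
          calc ∑ z : G, Scnt (A i3) (A i1) z * Scnt (A i2) (A i3) ((0 - x) - z)
              = ∑ z : G, (if z = (0:G) then 0 else L) *
                  (if (0 - x) - z = 0 then 0 else L) :=
                Finset.sum_congr rfl fun z _ => by
                  rw [hS i3 i1 h31 z, hS i2 i3 h23 ((0 - x) - z)]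
            _ = (L * L) * (if (0 - x : G) = 0 then r0 else r1) := evalCross (0 - x)
            _ = (L * L) * (if x = 0 then r0 else r1) := by
                simp only [zero_sub, neg_eq_zero]
      _ = r0 * (L * ((L * L) * r1)) := by
          have hterm : ∀ x : G,
              (if x = (0:G) then 0 else L) * ((L * L) * (if x = 0 then r0 else r1))
              = if x ∈ ((Finset.univ : Finset G).erase 0) then L * ((L * L) * r1) else 0 := by
            intro x
            by_cases h : x = 0
            · simp [h]
            · simp only [if_neg h]
              rw [if_pos (Finset.mem_erase.2 ⟨h, Finset.mem_univ x⟩)]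
          rw [Finset.sum_congr rfl (fun x _ => hterm x), Finset.sum_ite_mem,
            Finset.univ_inter, Finset.sum_const, smul_eq_mul]
  -- combine
  have key := TA.symm.trans TB
  rw [kk] at key
  have e : (L * r0) * ((L * L) * r1) = r0 * (L * ((L * L) * r1)) := by ring
  rw [e] at key
  have hzero : k * (L * L) = 0 :=
    Nat.add_right_cancel (key.trans (zero_add (r0 * (L * ((L * L) * r1)))).symm)
  rcases Nat.mul_eq_zero.mp hzero with h | h
  · omega
  · rcases Nat.mul_eq_zero.mp h with h' | h' <;> omega
end

section
/- Let A = {A_1, …, A_m} be a non-disjoint (v,m,k_1,…,k_m)-GPSEDF in a finite group G of order v, written additively (G is not assumed abelian). Then the family of complements {G∖A_1, G∖A_2, …, G∖A_m} is a non-disjoint (v, m, v−k_1, v−k_2, …, v−k_m)-GPSEDF in G. -/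
/-- `A₁,…,A_m` is a non-disjoint `(|G|,m,k₁,…,k_m)`-GPSEDF in `G`: `|Aᵢ| = kᵢ` and for all
`i ≠ j`, `Δ(Aᵢ,Aⱼ) = λᵢⱼ G` as multisets, where `λᵢⱼ = kᵢkⱼ/|G|`. -/
def IsNDGPSEDF {G : Type*} [AddGroup G] [Fintype G] {m : ℕ}
    (A : Fin m → Finset G) (k : Fin m → ℕ) : Prop :=
  (∀ i, (A i).card = k i) ∧
  ∀ i j, i ≠ j → ∃ lam : ℕ, lam * Fintype.card G = k i * k j ∧
    extDiff (A i) (A j) = lam • (Finset.univ : Finset G).val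

namespace NDGPSEDFAux

set_option linter.unusedSectionVars false

variable {G : Type*} [AddGroup G] [Fintype G] [DecidableEq G]

/-- multiset version of extDiff -/
def mext (s t : Multiset G) : Multiset G := s.bind fun a => t.map fun b => a - b

lemma extDiff_eq (A B : Finset G) : extDiff A B = mext A.val B.val := rfl

lemma mext_add_left (s s' t : Multiset G) : mext (s + s') t = mext s t + mext s' t :=
  Multiset.add_bind s s' _

lemma mext_add_right (s t t' : Multiset G) : mext s (t + t') = mext s t + mext s t' := by
  unfold mext
  simp only [Multiset.map_add]
  exact Multiset.bind_add s _ _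

lemma map_equiv_univ (e : G ≃ G) :
    (Finset.univ : Finset G).val.map (⇑e) = (Finset.univ : Finset G).val := by
  rw [show (Finset.univ : Finset G).val.map (⇑e)
        = ((Finset.univ : Finset G).map e.toEmbedding).val from rfl,
    Finset.map_univ_equiv]

lemma map_sub_right_univ (a : G) :
    (Finset.univ : Finset G).val.map (fun b => a - b) = (Finset.univ : Finset G).val := by
  have h : (fun b : G => a - b) = ⇑(Equiv.subLeft a) := by funext b; simp
  rw [h, map_equiv_univ]

lemma map_sub_left_univ (b : G) :
    (Finset.univ : Finset G).val.map (fun a => a - b) = (Finset.univ : Finset G).val := by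
  have h : (fun a : G => a - b) = ⇑(Equiv.subRight b) := by funext a; simp
  rw [h, map_equiv_univ]

lemma mext_univ_right (s : Multiset G) :
    mext s (Finset.univ : Finset G).val = (Multiset.card s) • (Finset.univ : Finset G).val := by
  unfold mext
  induction s using Multiset.induction_on with
  | empty => simp
  | cons a s ih =>
      rw [Multiset.cons_bind, ih, map_sub_right_univ, Multiset.card_cons, add_nsmul,
        one_nsmul, add_comm]

lemma mext_univ_left (t : Multiset G) :
    mext (Finset.univ : Finset G).val t = (Multiset.card t) • (Finset.univ : Finset G).val := by
  unfold mext
  induction t using Multiset.induction_on with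
  | empty => simp
  | cons b t ih =>
      simp only [Multiset.map_cons]
      rw [Multiset.bind_cons, ih, map_sub_left_univ, Multiset.card_cons, add_nsmul,
        one_nsmul, add_comm]

lemma compl_val_add (A : Finset G) :
    A.val + (Aᶜ).val = (Finset.univ : Finset G).val := by
  have h : Aᶜ = Finset.univ \ A := by
    simp [Finset.compl_eq_univ_sdiff]
  rw [h, Finset.sdiff_val, add_tsub_cancel_of_le]
  exact Finset.val_le_iff.mpr (Finset.subset_univ A)

end NDGPSEDFAux

open NDGPSEDFAux in
/-- if `{A₁,…,A_m}` is a non-disjoint `(v,m,k₁,…,k_m)`-GPSEDF in a finite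
(not necessarily abelian) group `G` of order `v`, then the complements
`{G∖A₁,…,G∖A_m}` form a non-disjoint `(v,m,v−k₁,…,v−k_m)`-GPSEDF in `G`. -/
theorem stmt_4 {G : Type*} [AddGroup G] [Fintype G] [DecidableEq G]
    (v m : ℕ) (hv : Fintype.card G = v) (hm : 1 < m)
    (A : Fin m → Finset G) (k : Fin m → ℕ)
    (hA : IsNDGPSEDF A k) :
    IsNDGPSEDF (fun i => (A i)ᶜ) (fun i => v - k i) := by
  obtain ⟨hcard, hdiff⟩ := hA
  have hv0 : 0 < v := hv ▸ Fintype.card_pos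
  have hk : ∀ i, k i ≤ v := fun i => by
    rw [← hcard i, ← hv]; exact Finset.card_le_univ _
  constructor
  · intro i
    simp [Finset.card_compl, hcard i, hv]
  · intro i j hij
    obtain ⟨lam, hlv, hAB⟩ := hdiff i j hij
    rw [hv] at hlv
    have hki : (k i : ℤ) ≤ v := by exact_mod_cast hk i
    have hkj : (k j : ℤ) ≤ v := by exact_mod_cast hk j
    have hvz : (0 : ℤ) < v := by exact_mod_cast hv0
    have hl : (lam : ℤ) * v = k i * k j := by exact_mod_cast hlv
    have hlami : lam ≤ k i := by
      have h1 : lam * v ≤ k i * v := by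
        rw [hlv]; exact Nat.mul_le_mul_left _ (hk j)
      exact Nat.le_of_mul_le_mul_right h1 hv0
    have hsum : k i + k j ≤ v + lam := by
      have h1 : ((k i : ℤ) + k j) ≤ (v : ℤ) + lam := by
        nlinarith [mul_nonneg (sub_nonneg.mpr hki) (sub_nonneg.mpr hkj)]
      exact_mod_cast h1
    refine ⟨v + lam - k i - k j, ?_, ?_⟩
    · show (v + lam - k i - k j) * Fintype.card G = (v - k i) * (v - k j)
      rw [hv]
      zify [hk i, hk j, show k i ≤ v + lam by omega, show k j ≤ v + lam - k i by omega]
      linear_combination hl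
    · show extDiff ((A i)ᶜ) ((A j)ᶜ) = (v + lam - k i - k j) • (Finset.univ : Finset G).val
      set U := (Finset.univ : Finset G).val with hU
      have cardAi : Multiset.card (A i).val = k i := hcard i
      have cardAj : Multiset.card (A j).val = k j := hcard j
      have h1 : mext (A i).val (A j).val + mext (A i).val ((A j)ᶜ).val
          = (k i) • U := by
        rw [← mext_add_right, compl_val_add, mext_univ_right, cardAi]
      have h2 : mext (A i).val ((A j)ᶜ).val = (k i - lam) • U := by
        have heq : lam • U + mext (A i).val ((A j)ᶜ).val = lam • U + (k i - lam) • U := by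
          have hAB' : mext (A i).val (A j).val = lam • U := hAB
          rw [← add_nsmul, show lam + (k i - lam) = k i by omega, ← h1, hAB']
        exact add_left_cancel heq
      have h3 : mext (A i).val ((A j)ᶜ).val + mext ((A i)ᶜ).val ((A j)ᶜ).val
          = (v - k j) • U := by
        rw [← mext_add_left, compl_val_add, mext_univ_left]
        congr 1
        show ((A j)ᶜ).card = v - k j
        simp [Finset.card_compl, hcard j, hv]
      have h4 : (k i - lam) • U + mext ((A i)ᶜ).val ((A j)ᶜ).val
          = (k i - lam) • U + (v + lam - k i - k j) • U := by
        rw [← add_nsmul, show k i - lam + (v + lam - k i - k j) = v - k j by omega,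
          ← h3, h2]
      exact add_left_cancel h4
end

section
/- Let A = {A_1, …, A_m} be a non-disjoint (v,m,k_1,…,k_m)-GPSEDF in a finite group G of order v, written additively (G is not assumed abelian). Let g_1, …, g_n ∈ G be such that the translates g_1 + A_m, g_2 + A_m, …, g_n + A_m are pairwise disjoint. Then {A_1, …, A_{m−1}, ⋃_{i=1}^n (g_i + A_m)} is a non-disjoint (v, m, k_1, …, k_{m−1}, n·k_m)-GPSEDF in G. -/
lemma map_add_univ {G : Type*} [AddGroup G] [Fintype G] [DecidableEq G] (g : G) :
    Multiset.map (fun a => g + a) (Finset.univ : Finset G).val = (Finset.univ : Finset G).val := by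
  rw [← Finset.image_val_of_injOn (fun a _ b _ h => by simpa using h)]
  congr 1
  exact Finset.image_univ_of_surjective (fun x => ⟨-g + x, by simp⟩)

lemma map_sub_univ {G : Type*} [AddGroup G] [Fintype G] [DecidableEq G] (g : G) :
    Multiset.map (fun a => a - g) (Finset.univ : Finset G).val = (Finset.univ : Finset G).val := by
  rw [← Finset.image_val_of_injOn (fun a _ b _ h => by simpa using h)]
  congr 1
  exact Finset.image_univ_of_surjective (fun x => ⟨x + g, by simp⟩)

lemma bind_const_smul {G : Type*} {n : ℕ} (s : Multiset G) :
    (Finset.univ : Finset (Fin n)).val.bind (fun _ => s) = n • s := by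
  rw [Multiset.bind, Multiset.map_const', Multiset.join]
  simp [Multiset.sum_replicate]


/-- if `{A₁,…,A_m}` is a non-disjoint `(v,m,k₁,…,k_m)`-GPSEDF in a finite
(not necessarily abelian) group `G`, and `g₁,…,g_n ∈ G` are such that the translates
`gᵢ + A_{i₀}` are pairwise disjoint, then replacing `A_{i₀}` by `⋃_{i=1}^n (gᵢ + A_{i₀})`
yields a non-disjoint `(v,m,k₁,…,k_{i₀-1}, n·k_{i₀}, k_{i₀+1},…,k_m)`-GPSEDF. -/
theorem stmt_6 {G : Type*} [AddGroup G] [Fintype G] [DecidableEq G]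
    (v m n : ℕ) (hv : Fintype.card G = v) (hm : 1 < m)
    (A : Fin m → Finset G) (k : Fin m → ℕ)
    (hA : IsNDGPSEDF A k) (i₀ : Fin m) (g : Fin n → G)
    (hdisj : ∀ i j, i ≠ j →
      Disjoint ((A i₀).image (fun a => g i + a)) ((A i₀).image (fun a => g j + a))) :
    IsNDGPSEDF
      (Function.update A i₀ (Finset.univ.biUnion (fun i => (A i₀).image (fun a => g i + a))))
      (Function.update k i₀ (n * k i₀)) := by
  obtain ⟨hcard, hlam⟩ := hA
  set B : Fin n → Finset G := fun i => (A i₀).image (fun a => g i + a) with hB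
  have hBval : ∀ i, (B i).val = (A i₀).val.map (fun a => g i + a) := fun i =>
    Finset.image_val_of_injOn (fun a _ b _ h => by simpa using h)
  have hUval : (Finset.univ.biUnion B).val = Finset.univ.val.bind fun i => (B i).val := by
    rw [← Finset.disjiUnion_eq_biUnion _ _
      (fun i _ j hj hij => hdisj i j hij)]
    rfl
  constructor
  · intro i
    rcases eq_or_ne i i₀ with rfl | hi
    · simp only [Function.update_self]
      rw [Finset.card_biUnion (fun a _ b _ h => hdisj a b h)]
      have hc : ∀ t : Fin n, (B t).card = k i := fun t => by
        rw [hB, Finset.card_image_of_injective _ (fun a b h => by simpa using h), hcard]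
      rw [Finset.sum_congr rfl (fun t _ => hc t)]
      simp [mul_comm]
    · simp [Function.update_of_ne hi, hcard]
  · intro i j hij
    rcases eq_or_ne i i₀ with rfl | hi
    · have hj : j ≠ i := fun h => hij h.symm
      obtain ⟨lam, hl1, hl2⟩ := hlam i j hij
      refine ⟨n * lam, ?_, ?_⟩
      · simp only [Function.update_self, Function.update_of_ne hj]
        rw [mul_assoc, hl1]; ring
      · simp only [Function.update_self, Function.update_of_ne hj]
        unfold extDiff at hl2 ⊢
        rw [hUval, Multiset.bind_assoc]
        have key : ∀ t : Fin n, ((B t).val.bind fun a => (A j).val.map fun b => a - b)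
            = lam • (Finset.univ : Finset G).val := by
          intro t
          rw [hBval, Multiset.bind_map]
          have h2 : ((A i).val.bind fun a => (A j).val.map fun b => g t + a - b)
              = Multiset.map (fun x => g t + x)
                  ((A i).val.bind fun a => (A j).val.map fun b => a - b) := by
            rw [Multiset.map_bind]
            congr 1; funext a
            rw [Multiset.map_map]
            congr 1; funext b
            simp [add_sub_assoc]
          rw [h2, hl2, Multiset.map_nsmul, map_add_univ]
        simp only [key]
        rw [bind_const_smul, smul_smul]
    · rcases eq_or_ne j i₀ with rfl | hj
      · obtain ⟨lam, hl1, hl2⟩ := hlam i j hij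
        refine ⟨n * lam, ?_, ?_⟩
        · simp only [Function.update_self, Function.update_of_ne hi]
          rw [mul_assoc, hl1]; ring
        · simp only [Function.update_self, Function.update_of_ne hi]
          unfold extDiff at hl2 ⊢
          rw [hUval]
          have key : ∀ a : G, (Finset.univ.val.bind fun t => (B t).val).map (fun b => a - b)
              = Finset.univ.val.bind fun t => ((B t).val.map fun b => a - b) :=
            fun a => Multiset.map_bind _ _ _
          simp only [key]
          rw [Multiset.bind_bind]
          have key2 : ∀ t : Fin n, ((A i).val.bind fun a => (B t).val.map fun b => a - b)
              = lam • (Finset.univ : Finset G).val := by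
            intro t
            have h3 : ∀ a : G, ((B t).val.map fun b => a - b)
                = Multiset.map (fun x => x - g t) ((A j).val.map fun b => a - b) := by
              intro a
              rw [hBval, Multiset.map_map, Multiset.map_map]
              congr 1; funext b
              simp [sub_eq_add_neg, neg_add_rev, add_assoc]
            simp only [h3]
            rw [← Multiset.map_bind, hl2, Multiset.map_nsmul, map_sub_univ]
          simp only [key2]
          rw [bind_const_smul, smul_smul]
      · obtain ⟨lam, hl1, hl2⟩ := hlam i j hij
        exact ⟨lam, by simp [Function.update_of_ne hi, Function.update_of_ne hj, hl1],
          by simp [Function.update_of_ne hi, Function.update_of_ne hj, hl2]⟩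
end

section
/- Let G be a finite abelian group, let H be a subgroup of G, and let π : G → G/H be the quotient map. Suppose Ā = {ā_1, …, ā_r} and B̄ = {b̄_1, …, b̄_s} are subsets of G/H forming a non-disjoint (|G/H|, 2, r, s)-GPSEDF in G/H. Then the preimages A' = π^{−1}(Ā) and B' = π^{−1}(B̄) form a non-disjoint (|G|, 2, r|H|, s|H|)-GPSEDF in G. -/
lemma count_extDiff {G : Type*} [AddCommGroup G] [DecidableEq G] (A B : Finset G) (c : G) :
    (extDiff A B).count c = (A.filter fun a => a - c ∈ B).card := by
  unfold extDiff
  rw [Multiset.count_bind, Finset.card_filter, Finset.sum]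
  congr 1
  refine Multiset.map_congr rfl ?_
  intro a _
  have hinj : Function.Injective (fun b : G => a - b) := fun x y h => by
    simpa using sub_right_injective h
  have h2 := Multiset.count_map_eq_count' (fun b : G => a - b) B.val hinj (a - c)
  rw [show a - (a - c) = c from sub_sub_cancel a c] at h2
  rw [h2, Multiset.count_eq_of_nodup B.nodup]
  rfl

lemma card_fiber {G : Type*} [AddCommGroup G] [Fintype G] [DecidableEq G]
    (H : AddSubgroup G) [DecidableEq (G ⧸ H)] [DecidablePred (· ∈ H)] (x : G ⧸ H) :
    (Finset.univ.filter fun g : G => QuotientAddGroup.mk' H g = x).card = Fintype.card H := by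
  obtain ⟨g₀, hg₀⟩ := QuotientAddGroup.mk'_surjective H x
  have : Fintype.card H = (Finset.univ.filter (· ∈ H)).card := by
    rw [Fintype.card_subtype]
  rw [this]
  apply Finset.card_bij' (fun g _ => g - g₀) (fun h _ => h + g₀)
  · intro a ha
    simp only [Finset.mem_filter, Finset.mem_univ, true_and] at ha ⊢
    rw [← QuotientAddGroup.eq_zero_iff]
    show (QuotientAddGroup.mk' H) (a - g₀) = 0
    rw [map_sub, hg₀, ha, sub_self]
  · intro a ha
    simp only [Finset.mem_filter, Finset.mem_univ, true_and] at ha ⊢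
    have h0 : (QuotientAddGroup.mk' H) a = 0 := (QuotientAddGroup.eq_zero_iff a).mpr ha
    show (QuotientAddGroup.mk' H) (a + g₀) = x
    rw [map_add, h0, hg₀, zero_add]
  · intro a _; simp
  · intro a _; simp

lemma card_preimage {G : Type*} [AddCommGroup G] [Fintype G] [DecidableEq G]
    (H : AddSubgroup G) [DecidableEq (G ⧸ H)] [DecidablePred (· ∈ H)] (S : Finset (G ⧸ H)) :
    (Finset.univ.filter fun g : G => QuotientAddGroup.mk' H g ∈ S).card
      = S.card * Fintype.card H := by
  rw [Finset.card_eq_sum_card_fiberwise (f := fun g => QuotientAddGroup.mk' H g) (t := S)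
      (s := Finset.univ.filter fun g : G => QuotientAddGroup.mk' H g ∈ S)
      (fun g hg => (Finset.mem_filter.mp (Finset.mem_coe.mp hg)).2)]
  rw [Finset.sum_congr rfl (fun x hx => ?_), Finset.sum_const, smul_eq_mul]
  rw [Finset.filter_filter]
  rw [show (Finset.univ.filter fun g : G =>
        QuotientAddGroup.mk' H g ∈ S ∧ QuotientAddGroup.mk' H g = x)
      = Finset.univ.filter fun g : G => QuotientAddGroup.mk' H g = x from
    Finset.filter_congr fun g _ => by
      constructor
      · exact fun h => h.2
      · exact fun h => ⟨h ▸ hx, h⟩]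
  exact card_fiber H x

lemma count_extDiff_preimage {G : Type*} [AddCommGroup G] [Fintype G] [DecidableEq G]
    (H : AddSubgroup G) [Fintype (G ⧸ H)] [DecidableEq (G ⧸ H)] [DecidablePred (· ∈ H)]
    (Abar Bbar : Finset (G ⧸ H)) (c : G) :
    (extDiff (Finset.univ.filter (fun g => (QuotientAddGroup.mk' H g) ∈ Abar))
             (Finset.univ.filter (fun g => (QuotientAddGroup.mk' H g) ∈ Bbar))).count c
      = (extDiff Abar Bbar).count (QuotientAddGroup.mk' H c) * Fintype.card H := by
  rw [count_extDiff, count_extDiff]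
  have h1 : ((Finset.univ.filter (fun g => (QuotientAddGroup.mk' H g) ∈ Abar)).filter
        fun a => a - c ∈ Finset.univ.filter (fun g => (QuotientAddGroup.mk' H g) ∈ Bbar))
      = Finset.univ.filter (fun g : G => QuotientAddGroup.mk' H g ∈
          Abar.filter fun x => x - QuotientAddGroup.mk' H c ∈ Bbar) := by
    ext a
    simp only [Finset.mem_filter, Finset.mem_univ, true_and, map_sub]
  rw [h1, card_preimage]

/-- if `Ā`, `B̄` form a non-disjoint `(|G/H|,2,r,s)`-GPSEDF in the quotient
`G/H` of a finite abelian group `G` by a subgroup `H`, then their preimages under the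
quotient map form a non-disjoint `(|G|,2,r|H|,s|H|)`-GPSEDF in `G`. -/
theorem stmt_7 {G : Type*} [AddCommGroup G] [Fintype G] [DecidableEq G]
    (H : AddSubgroup G) [Fintype (G ⧸ H)] [DecidableEq (G ⧸ H)] [DecidablePred (· ∈ H)]
    (r s : ℕ) (Abar Bbar : Finset (G ⧸ H))
    (hAcard : Abar.card = r) (hBcard : Bbar.card = s)
    (hAB : ∃ lam : ℕ, lam * Fintype.card (G ⧸ H) = r * s ∧
      extDiff Abar Bbar = lam • (Finset.univ : Finset (G ⧸ H)).val ∧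
      extDiff Bbar Abar = lam • (Finset.univ : Finset (G ⧸ H)).val) :
    letI A' : Finset G := Finset.univ.filter (fun g => (QuotientAddGroup.mk' H g) ∈ Abar)
    letI B' : Finset G := Finset.univ.filter (fun g => (QuotientAddGroup.mk' H g) ∈ Bbar)
    A'.card = r * Fintype.card H ∧ B'.card = s * Fintype.card H ∧
    ∃ lam' : ℕ, lam' * Fintype.card G = (r * Fintype.card H) * (s * Fintype.card H) ∧
      extDiff A' B' = lam' • (Finset.univ : Finset G).val ∧
      extDiff B' A' = lam' • (Finset.univ : Finset G).val := by
  obtain ⟨lam, hlam, hABeq, hBAeq⟩ := hAB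
  have hG : Fintype.card G = Fintype.card (G ⧸ H) * Fintype.card H := by
    rw [← Nat.card_eq_fintype_card, ← Nat.card_eq_fintype_card, ← Nat.card_eq_fintype_card]
    exact AddSubgroup.card_eq_card_quotient_mul_card_addSubgroup H
  refine ⟨by rw [card_preimage, hAcard], by rw [card_preimage, hBcard],
    lam * Fintype.card H, ?_, ?_, ?_⟩
  · rw [hG]
    calc lam * Fintype.card H * (Fintype.card (G ⧸ H) * Fintype.card H)
        = lam * Fintype.card (G ⧸ H) * (Fintype.card H * Fintype.card H) := by ring
      _ = r * s * (Fintype.card H * Fintype.card H) := by rw [hlam]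
      _ = r * Fintype.card H * (s * Fintype.card H) := by ring
  · refine Multiset.ext.mpr fun c => ?_
    rw [count_extDiff_preimage, hABeq, Multiset.count_nsmul, Multiset.count_nsmul,
      Multiset.count_eq_one_of_mem Finset.univ.nodup (Finset.mem_univ _),
      Multiset.count_eq_one_of_mem Finset.univ.nodup (Finset.mem_univ _)]
    ring
  · refine Multiset.ext.mpr fun c => ?_
    rw [count_extDiff_preimage, hBAeq, Multiset.count_nsmul, Multiset.count_nsmul,
      Multiset.count_eq_one_of_mem Finset.univ.nodup (Finset.mem_univ _),
      Multiset.count_eq_one_of_mem Finset.univ.nodup (Finset.mem_univ _)]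
    ring
end

section
/- Let m ≥ 2 and let (d_1, …, d_m) and (c_0, …, c_m) be sequences of natural numbers such that all the ratios d_i/c_{i−1} are equal to a common rational number z with 0 < z < 1 (equivalently d_i·c_{j−1} = d_j·c_{i−1} for all i, j, and 1 ≤ d_i < c_{i−1}). Set v = c_0 c_1 ⋯ c_m. Then there exists a non-disjoint (v, m, vz, vz²)-PSEDF in ℤ_v; here vz = d_1 c_1 c_2 ⋯ c_m and vz² = d_1 d_2 c_2 c_3 ⋯ c_m are integers. -/
set_option maxHeartbeats 1000000

namespace Stmt9

open Multiset

/-- Multiset sumset with multiplicity. -/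
def mAdd {G : Type*} [AddCommGroup G] (A B : Multiset G) : Multiset G :=
  A.bind fun a => B.map (a + ·)

variable {G : Type*} [AddCommGroup G]

lemma card_mAdd (A B : Multiset G) :
    Multiset.card (mAdd A B) = Multiset.card A * Multiset.card B := by
  simp [mAdd, Multiset.card_bind, Function.comp_def, Multiset.map_const', mul_comm]

lemma mAdd_comm (A B : Multiset G) : mAdd A B = mAdd B A := by
  rw [mAdd, Multiset.bind_map_comm]
  exact Multiset.bind_congr (fun b _ => Multiset.map_congr rfl fun a _ => add_comm a b)

lemma mAdd_assoc (A B C : Multiset G) : mAdd (mAdd A B) C = mAdd A (mAdd B C) := by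
  simp only [mAdd, Multiset.bind_assoc, Multiset.bind_map, Multiset.map_bind,
    Multiset.map_map, Function.comp_def, add_assoc]

instance : Std.Associative (α := Multiset G) mAdd := ⟨mAdd_assoc⟩
instance : Std.Commutative (α := Multiset G) mAdd := ⟨mAdd_comm⟩

lemma map_neg_mAdd (A B : Multiset G) :
    (mAdd A B).map (fun x => -x) = mAdd (A.map (fun x => -x)) (B.map (fun x => -x)) := by
  simp only [mAdd, Multiset.map_bind, Multiset.bind_map, Multiset.map_map,
    Function.comp_def, neg_add]

lemma extDiff_swap (A B : Finset G) :
    extDiff A B = (extDiff B A).map (fun x => -x) := by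
  simp only [extDiff, Multiset.map_bind, Multiset.map_map, Function.comp_def, neg_sub]
  exact Multiset.bind_map_comm _ _

lemma sub_to_mAdd (A B : Multiset G) :
    (A.bind fun a => B.map fun b => a - b) = mAdd A (B.map (fun x => -x)) := by
  simp only [mAdd, Multiset.map_map, Function.comp_def, sub_eq_add_neg]

lemma bind_const {α β : Type*} (A : Multiset α) (W : Multiset β) :
    (A.bind fun _ => W) = Multiset.card A • W := by
  induction A using Multiset.induction with
  | empty => simp
  | cons a s ih => simp [Multiset.cons_bind, ih, add_nsmul, one_nsmul, add_comm]

lemma filter_range_lt (L e : ℕ) (hL : L ≤ e) :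
    (Multiset.range e).filter (· < L) = Multiset.range L := by
  obtain ⟨b, rfl⟩ := Nat.exists_eq_add_of_le hL
  rw [Multiset.range_add, Multiset.filter_add]
  rw [Multiset.filter_eq_self.2 (fun a ha => (Multiset.mem_range.1 ha)),
    Multiset.filter_eq_nil.2, add_zero]
  intro a ha
  simp only [Multiset.mem_map, Multiset.mem_range] at ha
  obtain ⟨x, _, rfl⟩ := ha
  omega

lemma bind_range (e L N : ℕ) (hL : L ≤ e) :
    ((Multiset.range N).bind fun t => (Multiset.range L).map fun r => e * t + r)
      = (Multiset.range (e * N)).filter (fun x => x % e < L) := by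
  induction N with
  | zero => simp
  | succ n ih =>
    rw [Multiset.range_succ, Multiset.cons_bind, ih, Nat.mul_succ, Multiset.range_add,
      Multiset.filter_add, add_comm]
    congr 1
    rw [Multiset.filter_map]
    simp only [Function.comp_def]
    have : ∀ r ∈ Multiset.range e, ((e * n + r) % e < L) ↔ (r < L) := by
      intro r hr
      rw [Multiset.mem_range] at hr
      rw [Nat.mul_add_mod, Nat.mod_eq_of_lt hr]
    rw [Multiset.filter_congr this, filter_range_lt L e hL]

lemma range_mul (e Q : ℕ) :
    Multiset.range (e * Q)
      = (Multiset.range Q).bind fun s => (Multiset.range e).map fun r => e * s + r := by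
  rcases Nat.eq_zero_or_pos e with rfl | he0
  · simp
  · rw [bind_range e e Q le_rfl, Multiset.filter_eq_self.2]
    intro x _
    exact Nat.mod_lt x he0

section ZModPart

variable {v : ℕ} [NeZero v]

lemma map_add_univ (a : ZMod v) :
    (Finset.univ : Finset (ZMod v)).val.map (a + ·) = (Finset.univ : Finset (ZMod v)).val := by
  have h1 : Finset.image (a + ·) Finset.univ = (Finset.univ : Finset (ZMod v)) :=
    Finset.image_univ_of_surjective (fun x => ⟨x - a, by ring⟩)
  have h2 := Finset.image_val_of_injOn
    (f := (a + ·)) (s := (Finset.univ : Finset (ZMod v)))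
    (fun x _ y _ h => by simpa using h)
  rw [h1] at h2
  exact h2.symm

lemma map_neg_univ :
    (Finset.univ : Finset (ZMod v)).val.map (fun x => -x)
      = (Finset.univ : Finset (ZMod v)).val := by
  have h1 : Finset.image (fun x : ZMod v => -x) Finset.univ = (Finset.univ : Finset (ZMod v)) :=
    Finset.image_univ_of_surjective (fun x => ⟨-x, by ring⟩)
  have h2 := Finset.image_val_of_injOn
    (f := fun x : ZMod v => -x) (s := (Finset.univ : Finset (ZMod v)))
    (fun x _ y _ h => by simpa using h)
  rw [h1] at h2
  exact h2.symm

lemma mAdd_univ (A : Multiset (ZMod v)) :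
    mAdd A (Finset.univ : Finset (ZMod v)).val
      = Multiset.card A • (Finset.univ : Finset (ZMod v)).val := by
  rw [mAdd, Multiset.bind_congr (fun a _ => map_add_univ a)]
  exact bind_const _ _

lemma transversal (e N : ℕ) (he : e * N = v) :
    mAdd ((Multiset.range N).map fun t => ((e * t : ℕ) : ZMod v))
      ((Multiset.range e).map fun r => -((r : ℕ) : ZMod v))
      = (Finset.univ : Finset (ZMod v)).val := by
  have hv0 : 0 < v := Nat.pos_of_ne_zero (NeZero.ne v)
  have he0 : 0 < e := by
    rcases Nat.eq_zero_or_pos e with rfl | h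
    · simp at he; omega
    · exact h
  have hN0 : 0 < N := by
    rcases Nat.eq_zero_or_pos N with rfl | h
    · simp at he; omega
    · exact h
  have hcard : Multiset.card (mAdd ((Multiset.range N).map fun t => ((e * t : ℕ) : ZMod v))
      ((Multiset.range e).map fun r => -((r : ℕ) : ZMod v))) = v := by
    rw [card_mAdd]; simp [mul_comm, he]
  refine (Multiset.eq_of_le_of_card_le ?_ ?_).symm
  · rw [Multiset.le_iff_count]
    intro x
    have hx : x ∈ mAdd ((Multiset.range N).map fun t => ((e * t : ℕ) : ZMod v))
        ((Multiset.range e).map fun r => -((r : ℕ) : ZMod v)) := by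
      simp only [mAdd, Multiset.mem_bind, Multiset.mem_map, Multiset.mem_range]
      set n := x.val with hn
      have hnv : n < v := ZMod.val_lt x
      set r := (e - n % e) % e with hrdef
      have hr : r < e := Nat.mod_lt _ he0
      have hdvd : e ∣ n + r := by
        rcases Nat.eq_zero_or_pos (n % e) with h | h
        · have hr0 : r = 0 := by
            rw [hrdef, h, Nat.sub_zero, Nat.mod_self]
          rw [hr0, Nat.add_zero]
          exact Nat.dvd_of_mod_eq_zero h
        · have hlt : n % e < e := Nat.mod_lt _ he0
          have hr' : r = e - n % e := by
            rw [hrdef]; exact Nat.mod_eq_of_lt (by omega)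
          have h2 : (n + r) % e = 0 := by
            rw [Nat.add_mod, hr', Nat.mod_eq_of_lt (show e - n % e < e by omega)]
            rw [show n % e + (e - n % e) = e by omega, Nat.mod_self]
          exact Nat.dvd_of_mod_eq_zero h2
      obtain ⟨q, hq⟩ := hdvd
      refine ⟨_, ⟨q % N, Nat.mod_lt _ hN0, rfl⟩, _, ⟨r, hr, rfl⟩, ?_⟩
      have hmod : (e * (q % N) : ℕ) ≡ e * q [MOD v] := by
        rw [← he]
        exact Nat.ModEq.mul_left' e (Nat.mod_modEq q N)
      have h1 : ((e * (q % N) : ℕ) : ZMod v) = ((e * q : ℕ) : ZMod v) :=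
        (ZMod.natCast_eq_natCast_iff _ _ _).2 hmod
      rw [h1, ← hq]
      push_cast
      rw [hn, add_neg_cancel_right]
      exact ZMod.natCast_rightInverse x
    calc Multiset.count x (Finset.univ : Finset (ZMod v)).val = 1 :=
          Multiset.count_eq_one_of_mem (Finset.univ.nodup) (Finset.mem_univ x)
      _ ≤ _ := Multiset.one_le_count_iff_mem.2 hx
  · rw [hcard]
    simp

lemma core (e NI LI EJ NJ Q : ℕ) (he : e * NI = v)
    (A B : Multiset (ZMod v))
    (hA : A = ((Multiset.range NI).bind fun t =>
      (Multiset.range LI).map fun r => e * t + r).map (Nat.cast : ℕ → ZMod v))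
    (hB : B = ((Multiset.range NJ).bind fun t =>
      (Multiset.range (e * Q)).map fun r => EJ * t + r).map (Nat.cast : ℕ → ZMod v)) :
    (A.bind fun a => B.map fun b => a - b)
      = (LI * (Q * NJ)) • (Finset.univ : Finset (ZMod v)).val := by
  set Hi : Multiset (ZMod v) := (Multiset.range NI).map fun t => ((e * t : ℕ) : ZMod v) with hHi
  set Xi : Multiset (ZMod v) := (Multiset.range LI).map fun r => ((r : ℕ) : ZMod v) with hXi
  set Hj : Multiset (ZMod v) := (Multiset.range NJ).map fun t => ((EJ * t : ℕ) : ZMod v) with hHj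
  set Ej : Multiset (ZMod v) := (Multiset.range Q).map fun s => ((e * s : ℕ) : ZMod v) with hEj
  set R : Multiset (ZMod v) := (Multiset.range e).map fun r => ((r : ℕ) : ZMod v) with hR
  have hA' : A = mAdd Hi Xi := by
    rw [hA, hHi, hXi]
    simp only [mAdd, Multiset.map_bind, Multiset.bind_map, Multiset.map_map,
      Function.comp_def, Nat.cast_add]
  have hB' : B = mAdd Hj (mAdd Ej R) := by
    rw [hB, range_mul e Q, hHj, hEj, hR]
    simp only [mAdd, Multiset.map_bind, Multiset.bind_map, Multiset.map_map,
      Function.comp_def, Nat.cast_add, add_assoc]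
  rw [sub_to_mAdd, hA', hB', map_neg_mAdd, map_neg_mAdd]
  have hperm : mAdd (mAdd Hi Xi)
      (mAdd (Hj.map fun x => -x) (mAdd (Ej.map fun x => -x) (R.map fun x => -x)))
      = mAdd (mAdd Xi (mAdd (Hj.map fun x => -x) (Ej.map fun x => -x)))
        (mAdd Hi (R.map fun x => -x)) := by ac_rfl
  rw [hperm]
  have htr : mAdd Hi (R.map fun x => -x) = (Finset.univ : Finset (ZMod v)).val := by
    rw [hHi, hR, Multiset.map_map]
    exact transversal e NI he
  rw [htr, mAdd_univ]
  congr 1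
  simp only [card_mAdd, hXi, hHj, hEj, Multiset.card_map, Multiset.card_range]
  ring

/-- The main construction, phrased with `ℕ`-indexed data. -/
lemma main (v k lam m : ℕ) [NeZero v] (hm : 2 ≤ m) (C D : ℕ → ℕ)
    (hCpos : ∀ t, 0 < C t)
    (hDC : ∀ t, t < m → D t < C t)
    (hzn : ∀ i j, i < m → j < m → D i * C j = D j * C i)
    (hvP : v = ∏ t ∈ Finset.range (m + 1), C t)
    (hk : k * C 0 = D 0 * v)
    (hlam : lam * (C 0 * C 1) = D 0 * D 1 * v) :
    ∃ A : Fin m → Finset (ZMod v),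
      (∀ i, (A i).card = k) ∧
      ∀ i j, i ≠ j → extDiff (A i) (A j) = lam • (Finset.univ : Finset (ZMod v)).val := by
  classical
  set P : ℕ → ℕ := fun n => ∏ t ∈ Finset.range n, C t with hP
  have hPsucc : ∀ n, P (n + 1) = P n * C n := fun n => Finset.prod_range_succ _ _
  have hPadd : ∀ a b, P (a + b) = P a * ∏ t ∈ Finset.range b, C (a + t) :=
    fun a b => Finset.prod_range_add _ _ _
  have hvP' : v = P (m + 1) := hvP
  set N : Fin m → ℕ := fun i => ∏ t ∈ Finset.range (m - i.val), C (i.val + 1 + t) with hN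
  have hEN : ∀ i : Fin m, P (i.val + 1) * N i = v := by
    intro i
    conv_rhs => rw [hvP', show m + 1 = (i.val + 1) + (m - i.val) by omega,
      hPadd (i.val + 1) (m - i.val)]
  have hLE : ∀ i : Fin m, P i.val * D i.val ≤ P (i.val + 1) := by
    intro i
    rw [hPsucc]
    exact Nat.mul_le_mul_left _ (le_of_lt (hDC i.val i.isLt))
  have hnodup : ∀ i : Fin m,
      (((Multiset.range v).filter
        (fun x => x % P (i.val + 1) < P i.val * D i.val)).map
          (Nat.cast : ℕ → ZMod v)).Nodup := by
    intro i
    refine Multiset.Nodup.map_on ?_ ((Multiset.nodup_range v).filter _)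
    intro x hx y hy hxy
    rw [Multiset.mem_filter, Multiset.mem_range] at hx hy
    have := congrArg ZMod.val hxy
    rwa [ZMod.val_cast_of_lt hx.1, ZMod.val_cast_of_lt hy.1] at this
  set A : Fin m → Finset (ZMod v) := fun i =>
    (⟨((Multiset.range v).filter
        (fun x => x % P (i.val + 1) < P i.val * D i.val)).map (Nat.cast : ℕ → ZMod v),
      hnodup i⟩ : Finset (ZMod v)) with hA
  have hAval : ∀ i : Fin m, (A i).val
      = ((Multiset.range (N i)).bind fun t =>
          (Multiset.range (P i.val * D i.val)).map fun r => P (i.val + 1) * t + r).map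
        (Nat.cast : ℕ → ZMod v) := by
    intro i
    rw [bind_range _ _ _ (hLE i), hEN i]
  have hcard : ∀ i, (A i).card = k := by
    intro i
    have h1 : (A i).card = Multiset.card ((A i).val) := rfl
    rw [h1, hAval i, Multiset.card_map, Multiset.card_bind]
    simp only [Function.comp_def, Multiset.card_map, Multiset.card_range,
      Multiset.map_const', Multiset.sum_replicate, smul_eq_mul]
    apply Nat.eq_of_mul_eq_mul_right (hCpos 0)
    rw [hk]
    have h5 : D i.val * C 0 = D 0 * C i.val := hzn i.val 0 i.isLt (by omega)
    calc N i * (P i.val * D i.val) * C 0 = (D i.val * C 0) * (P i.val * N i) := by ring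
      _ = (D 0 * C i.val) * (P i.val * N i) := by rw [h5]
      _ = D 0 * ((P i.val * C i.val) * N i) := by ring
      _ = D 0 * (P (i.val + 1) * N i) := by rw [hPsucc i.val]
      _ = D 0 * v := by rw [hEN i]
  have hmain : ∀ i j : Fin m, i.val < j.val →
      extDiff (A i) (A j) = lam • (Finset.univ : Finset (ZMod v)).val := by
    intro i j hij
    set S : ℕ := ∏ t ∈ Finset.range (j.val - (i.val + 1)), C (i.val + 1 + t) with hS
    have hPj : P j.val = P (i.val + 1) * S := by
      rw [show j.val = (i.val + 1) + (j.val - (i.val + 1)) by omega, hPadd]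
    have hLj : P j.val * D j.val = P (i.val + 1) * (S * D j.val) := by rw [hPj]; ring
    have hBval : (A j).val = ((Multiset.range (N j)).bind fun t =>
        (Multiset.range (P (i.val + 1) * (S * D j.val))).map
          fun r => P (j.val + 1) * t + r).map (Nat.cast : ℕ → ZMod v) := by
      rw [hAval j, hLj]
    have hcore := core (v := v) (P (i.val + 1)) (N i) (P i.val * D i.val) (P (j.val + 1))
      (N j) (S * D j.val) (hEN i) _ _ (hAval i) hBval
    show ((A i).val.bind fun a => (A j).val.map fun b => a - b) = _
    rw [hcore]
    congr 1
    have hC01 : 0 < C 0 * C 1 := Nat.mul_pos (hCpos 0) (hCpos 1)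
    apply Nat.eq_of_mul_eq_mul_right hC01
    rw [hlam]
    have h5 : D i.val * C 0 = D 0 * C i.val := hzn i.val 0 i.isLt (by omega)
    have h6 : D j.val * C 1 = D 1 * C j.val := hzn j.val 1 j.isLt (by omega)
    calc P i.val * D i.val * (S * D j.val * N j) * (C 0 * C 1)
        = (D i.val * C 0) * ((D j.val * C 1) * (P i.val * (S * N j))) := by ring
      _ = (D 0 * C i.val) * ((D 1 * C j.val) * (P i.val * (S * N j))) := by rw [h5, h6]
      _ = D 0 * D 1 * ((P i.val * C i.val) * (S * (C j.val * N j))) := by ring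
      _ = D 0 * D 1 * ((P (i.val + 1) * S) * (C j.val * N j)) := by rw [hPsucc i.val]; ring
      _ = D 0 * D 1 * (P j.val * (C j.val * N j)) := by rw [← hPj]
      _ = D 0 * D 1 * ((P j.val * C j.val) * N j) := by ring
      _ = D 0 * D 1 * (P (j.val + 1) * N j) := by rw [hPsucc j.val]
      _ = D 0 * D 1 * v := by rw [hEN j]
  refine ⟨A, hcard, ?_⟩
  intro i j hne
  rcases Nat.lt_or_ge i.val j.val with h | h
  · exact hmain i j h
  · have h' : j.val < i.val := by
      have hneval : i.val ≠ j.val := fun hh => hne (Fin.ext hh)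
      omega
    rw [extDiff_swap, hmain j i h', Multiset.map_nsmul, map_neg_univ]

end ZModPart

end Stmt9

namespace Stmt9

theorem translate (m : ℕ) (hm : 2 ≤ m) (d : Fin m → ℕ) (c : Fin (m + 1) → ℕ)
    (hd₁ : ∀ i, 1 ≤ d i) (hd₂ : ∀ i, d i < c i.castSucc)
    (hz : ∀ i j, d i * c j.castSucc = d j * c i.castSucc)
    (hcm : 1 ≤ c (Fin.last m))
    (v k lam : ℕ) [NeZero v] (hv : v = ∏ i, c i)
    (hk : k * c (⟨0, Nat.lt_of_lt_of_le (by decide) hm⟩ : Fin m).castSucc = d ⟨0, Nat.lt_of_lt_of_le (by decide) hm⟩ * v)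
    (hlam : lam * (c (⟨0, Nat.lt_of_lt_of_le (by decide) hm⟩ : Fin m).castSucc * c (⟨1, Nat.lt_of_lt_of_le (by decide) hm⟩ : Fin m).castSucc)
      = d ⟨0, Nat.lt_of_lt_of_le (by decide) hm⟩ * d ⟨1, Nat.lt_of_lt_of_le (by decide) hm⟩ * v) :
    ∃ A : Fin m → Finset (ZMod v),
      (∀ i, (A i).card = k) ∧
      ∀ i j, i ≠ j → extDiff (A i) (A j) = lam • (Finset.univ : Finset (ZMod v)).val := by
  classical
  set C : ℕ → ℕ := fun t => if h : t < m + 1 then c ⟨t, h⟩ else 1 with hC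
  set D : ℕ → ℕ := fun t => if h : t < m then d ⟨t, h⟩ else 1 with hD
  have hCval : ∀ (t : ℕ) (h : t < m), C t = c ((⟨t, h⟩ : Fin m).castSucc) := by
    intro t h
    rw [hC]
    dsimp only
    rw [dif_pos (by omega)]
    exact congrArg c (Fin.ext (by simp))
  have hDval : ∀ (t : ℕ) (h : t < m), D t = d ⟨t, h⟩ := by
    intro t h
    rw [hD]
    dsimp only
    rw [dif_pos h]
  have hCpos : ∀ t, 0 < C t := by
    intro t
    rcases Nat.lt_or_ge t m with h | h
    · have h1 := hd₁ ⟨t, h⟩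
      have h2 := hd₂ ⟨t, h⟩
      have h3 := hCval t h
      omega
    · rcases Nat.lt_or_ge t (m + 1) with h' | h'
      · have h3 : C t = c (Fin.last m) := by
          rw [hC]; dsimp only; rw [dif_pos h']
          exact congrArg c (Fin.ext (by simp; omega))
        omega
      · rw [hC]; dsimp only; rw [dif_neg (by omega)]; omega
  have hDC : ∀ t, t < m → D t < C t := by
    intro t h
    have h2 := hd₂ ⟨t, h⟩
    have h3 := hCval t h
    have h4 := hDval t h
    omega
  have hzn : ∀ i j, i < m → j < m → D i * C j = D j * C i := by
    intro i j hi hj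
    rw [hDval i hi, hDval j hj, hCval i hi, hCval j hj]
    exact hz ⟨i, hi⟩ ⟨j, hj⟩
  have hvP : v = ∏ t ∈ Finset.range (m + 1), C t := by
    rw [hv, ← Fin.prod_univ_eq_prod_range (fun t => C t) (m + 1)]
    refine Finset.prod_congr rfl fun i _ => ?_
    rw [hC]
    dsimp only
    rw [dif_pos i.isLt]
  have hk' : k * C 0 = D 0 * v := by
    simp only [hCval 0 (by omega), hDval 0 (by omega)]
    exact hk
  have hlam' : lam * (C 0 * C 1) = D 0 * D 1 * v := by
    simp only [hCval 0 (by omega), hCval 1 (by omega), hDval 0 (by omega), hDval 1 (by omega)]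
    exact hlam
  exact Stmt9.main v k lam m hm C D hCpos hDC hzn hvP hk' hlam'

end Stmt9

/-- let `m ≥ 2` and let `(d₁,…,d_m)`, `(c₀,…,c_m)` be naturals with all
ratios `dᵢ/c_{i-1}` equal to a common rational `z` with `0 < z < 1` (i.e.
`dᵢ·c_{j-1} = dⱼ·c_{i-1}` and `1 ≤ dᵢ < c_{i-1}`).  With `v = c₀c₁⋯c_m`, there exists a
non-disjoint `(v, m, vz, vz²)`-PSEDF in `ℤ_v`; here `k = vz` and `λ = vz²` are the
natural numbers determined by `k·c₀ = d₁·v` and `λ·c₀c₁ = d₁d₂·v`. -/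
theorem stmt_9 (m : ℕ) (hm : 2 ≤ m) (d : Fin m → ℕ) (c : Fin (m + 1) → ℕ)
    (hd₁ : ∀ i, 1 ≤ d i) (hd₂ : ∀ i, d i < c i.castSucc)
    (hz : ∀ i j, d i * c j.castSucc = d j * c i.castSucc)
    (hcm : 1 ≤ c (Fin.last m))
    (v k lam : ℕ) (hv : v = ∏ i, c i)
    (hk : k * c (⟨0, by omega⟩ : Fin m).castSucc = d ⟨0, by omega⟩ * v)
    (hlam : lam * (c (⟨0, by omega⟩ : Fin m).castSucc * c (⟨1, by omega⟩ : Fin m).castSucc)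
      = d ⟨0, by omega⟩ * d ⟨1, by omega⟩ * v) :
    haveI : NeZero v := ⟨by
      subst hv
      exact (Finset.prod_pos (fun i _ => Fin.lastCases (by omega)
        (fun j => by have h1 := hd₁ j; have h2 := hd₂ j; omega) i)).ne'⟩
    ∃ A : Fin m → Finset (ZMod v),
      (∀ i, (A i).card = k) ∧
      ∀ i j, i ≠ j → extDiff (A i) (A j) = lam • (Finset.univ : Finset (ZMod v)).val := by
  haveI : NeZero v := ⟨by
    subst hv
    exact (Finset.prod_pos (fun i _ => Fin.lastCases (by omega)
      (fun j => by have h1 := hd₁ j; have h2 := hd₂ j; omega) i)).ne'⟩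
  exact Stmt9.translate m hm d c hd₁ hd₂ hz hcm v k lam hv hk hlam
end

section
/- Let f be a natural number with f ≥ 1, let b and m be integers with b ≥ 2 and m ≥ 2, and let a be an integer with 1 ≤ a < b. Then there exists a non-disjoint (b^m f, m, a b^{m−1} f, a² b^{m−2} f)-PSEDF in ℤ_{b^m f}. -/
/-! ### Auxiliary lemmas -/

lemma digit_unique {K u u' v v' : ℕ} (hK : 0 < K) (hu : u < K) (hu' : u' < K)
    (h : u + v * K = u' + v' * K) : u = u' ∧ v = v' := by
  have h1 : u = u' := by
    have := congrArg (· % K) h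
    simpa [Nat.add_mul_mod_self_right, Nat.mod_eq_of_lt hu, Nat.mod_eq_of_lt hu'] using this
  subst h1
  have h2 : v * K = v' * K := by omega
  exact ⟨rfl, Nat.eq_of_mul_eq_mul_right hK h2⟩

lemma map_univ_bij {α G : Type*} [Fintype α] [Fintype G] [DecidableEq G] {h : α → G}
    (hh : Function.Bijective h) :
    Multiset.map h (Finset.univ : Finset α).val = (Finset.univ : Finset G).val := by
  have hn : (Multiset.map h (Finset.univ : Finset α).val).Nodup :=
    (Finset.univ.nodup).map hh.injective
  have : (⟨_, hn⟩ : Finset G) = Finset.univ := by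
    apply Finset.eq_univ_of_card
    show Multiset.card _ = _
    rw [Multiset.card_map]
    simpa using Fintype.card_of_bijective hh
  exact congrArg Finset.val this

lemma bind_const' {α β : Type*} (s : Multiset α) (t : Multiset β) :
    (s.bind fun _ => t) = Multiset.card s • t := by
  induction s using Multiset.induction_on with
  | empty => simp
  | cons a s ih =>
      rw [Multiset.cons_bind, ih, Multiset.card_cons, add_nsmul, one_nsmul, add_comm]

lemma bind_eq_map_prod {α β γ : Type*} [Fintype α] [Fintype β] (g : α → β → γ) :
    ((Finset.univ : Finset α).val.bind fun p => (Finset.univ : Finset β).val.map (g p))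
      = Multiset.map (fun x : α × β => g x.1 x.2) (Finset.univ : Finset (α × β)).val := by
  rw [← Finset.univ_product_univ, Finset.product_val]
  show _ = Multiset.map _ (Multiset.product _ _)
  rw [Multiset.product, Multiset.map_bind]
  simp [Multiset.map_map, Function.comp]

lemma extDiff_neg {G : Type*} [AddGroup G] (A B : Finset G) :
    extDiff A B = Multiset.map (fun x => -x) (extDiff B A) := by
  rw [extDiff, extDiff, Multiset.map_bind]
  simp only [Multiset.map_map, Function.comp, neg_sub]
  exact Multiset.bind_map_comm A.val B.val

/-- The parametrizing map for the block `A k` of the PSEDF. -/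
def pMap (f b m a N k : ℕ) (p : Fin (b ^ k * f) × Fin a × Fin (b ^ (m - 1 - k))) : ZMod N :=
  (((p.1 : ℕ) + (p.2.1 : ℕ) * (b ^ k * f) + (p.2.2 : ℕ) * (b ^ (k + 1) * f) : ℕ) : ZMod N)

lemma pMap_lt {f b m a k : ℕ} (hf : 1 ≤ f) (hb : 2 ≤ b) (ha₂ : a < b) (hk : k ≤ m - 1)
    (hm : 2 ≤ m) (p : Fin (b ^ k * f) × Fin a × Fin (b ^ (m - 1 - k))) :
    (p.1 : ℕ) + (p.2.1 : ℕ) * (b ^ k * f) + (p.2.2 : ℕ) * (b ^ (k + 1) * f) < b ^ m * f := by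
  obtain ⟨u, v, w⟩ := p
  have hu : (u : ℕ) < b ^ k * f := u.isLt
  have hv : (v : ℕ) < a := v.isLt
  have hw : (w : ℕ) < b ^ (m - 1 - k) := w.isLt
  have hKey : b ^ (m - 1 - k) * (b ^ (k + 1) * f) = b ^ m * f := by
    rw [← mul_assoc, ← pow_add]
    congr 2
    omega
  have h1 : ((v : ℕ) + 1) * (b ^ k * f) ≤ b * (b ^ k * f) :=
    Nat.mul_le_mul_right _ (by omega)
  have h2 : ((w : ℕ) + 1) * (b ^ (k + 1) * f) ≤ b ^ (m - 1 - k) * (b ^ (k + 1) * f) :=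
    Nat.mul_le_mul_right _ (by omega)
  have h3 : b * (b ^ k * f) = b ^ (k + 1) * f := by rw [pow_succ]; ring
  nlinarith [hu, h1, h2]

lemma pMap_inj {f b m a k : ℕ} (hf : 1 ≤ f) (hb : 2 ≤ b) (ha₂ : a < b) (hk : k ≤ m - 1)
    (hm : 2 ≤ m) : Function.Injective (pMap f b m a (b ^ m * f) k) := by
  haveI : NeZero (b ^ m * f) := ⟨(Nat.mul_pos (pow_pos (by omega) m) (by omega)).ne'⟩
  rintro ⟨u, v, w⟩ ⟨u', v', w'⟩ h
  have hlt := pMap_lt hf hb ha₂ hk hm (⟨u, v, w⟩ : Fin (b ^ k * f) × Fin a × Fin (b ^ (m - 1 - k)))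
  have hlt' := pMap_lt hf hb ha₂ hk hm
    (⟨u', v', w'⟩ : Fin (b ^ k * f) × Fin a × Fin (b ^ (m - 1 - k)))
  simp only at hlt hlt'
  have hnat : (u : ℕ) + (v : ℕ) * (b ^ k * f) + (w : ℕ) * (b ^ (k + 1) * f)
      = (u' : ℕ) + (v' : ℕ) * (b ^ k * f) + (w' : ℕ) * (b ^ (k + 1) * f) := by
    have := congrArg ZMod.val h
    rwa [pMap, pMap, ZMod.val_cast_of_lt hlt, ZMod.val_cast_of_lt hlt'] at this
  have hK : 0 < b ^ k * f := Nat.mul_pos (pow_pos (by omega) k) (by omega)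
  have hre : ∀ (v w : ℕ), v * (b ^ k * f) + w * (b ^ (k + 1) * f)
      = (v + w * b) * (b ^ k * f) := by
    intro v w; rw [pow_succ]; ring
  have hnat2 : (u : ℕ) + ((v : ℕ) + (w : ℕ) * b) * (b ^ k * f)
      = (u' : ℕ) + ((v' : ℕ) + (w' : ℕ) * b) * (b ^ k * f) := by
    rw [← hre, ← hre]; omega
  obtain ⟨h1, h2⟩ := digit_unique hK u.isLt u'.isLt hnat2
  obtain ⟨h3, h4⟩ := digit_unique (show 0 < b by omega)
    (lt_trans v.isLt ha₂) (lt_trans v'.isLt ha₂) h2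
  simp only [Prod.mk.injEq]
  exact ⟨Fin.ext h1, Fin.ext h3, Fin.ext h4⟩

lemma key_lemma_s10 (f b m a : ℕ) (hf : 1 ≤ f) (hb : 2 ≤ b) (hm : 2 ≤ m) (ha₂ : a < b)
    [NeZero (b ^ m * f)] (i j : ℕ) (hij : i < j) (hj : j ≤ m - 1) :
    extDiff (Finset.image (pMap f b m a (b ^ m * f) i) Finset.univ)
        (Finset.image (pMap f b m a (b ^ m * f) j) Finset.univ)
      = (a ^ 2 * b ^ (m - 2) * f) • (Finset.univ : Finset (ZMod (b ^ m * f))).val := by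
  have hb0 : 0 < b := by omega
  have hf0 : 0 < f := hf
  have hi : i ≤ m - 1 := by omega
  rw [extDiff, Finset.image_val_of_injOn ((pMap_inj hf hb ha₂ hi hm).injOn),
    Finset.image_val_of_injOn ((pMap_inj hf hb ha₂ hj hm).injOn), Multiset.bind_map]
  simp only [Multiset.map_map, Function.comp]
  rw [bind_eq_map_prod (fun p q => pMap f b m a (b ^ m * f) i p - pMap f b m a (b ^ m * f) j q)]
  have hBtBs : b ^ (j - 1 - i) * b ^ (m - j) = b ^ (m - 1 - i) := by
    rw [← pow_add]; congr 1; omega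
  have hpf : ∀ (t : Fin (b ^ (j - 1 - i))) (s : Fin (b ^ (m - j))),
      (t : ℕ) + (s : ℕ) * b ^ (j - 1 - i) < b ^ (m - 1 - i) := by
    intro t s
    have h1 : ((s : ℕ) + 1) * b ^ (j - 1 - i) ≤ b ^ (m - j) * b ^ (j - 1 - i) :=
      Nat.mul_le_mul_right _ s.isLt
    have := t.isLt
    nlinarith [hBtBs]
  set E : ((Fin (b ^ i * f) × Fin a × Fin (b ^ (j - 1 - i)) × Fin a × Fin (b ^ (m - 1 - j)))
        × (Fin (b ^ (m - j)) × Fin (b ^ j * f)))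
      → ((Fin (b ^ i * f) × Fin a × Fin (b ^ (m - 1 - i)))
        × (Fin (b ^ j * f) × Fin a × Fin (b ^ (m - 1 - j)))) :=
    fun x => ((x.1.1, x.1.2.1, ⟨(x.1.2.2.1 : ℕ) + (x.2.1 : ℕ) * b ^ (j - 1 - i),
        hpf x.1.2.2.1 x.2.1⟩), (x.2.2, x.1.2.2.2.1, x.1.2.2.2.2)) with hE
  have hEbij : Function.Bijective E := by
    rw [Fintype.bijective_iff_injective_and_card]
    constructor
    · rintro ⟨⟨u, v, t, v', w'⟩, s, u'⟩ ⟨⟨u₂, v₂, t₂, v₂', w₂'⟩, s₂, u₂'⟩ h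
      simp only [hE, Prod.mk.injEq, Fin.mk.injEq] at h
      obtain ⟨⟨h1, h2, h3⟩, h4, h5, h6⟩ := h
      obtain ⟨hT, hS⟩ := digit_unique (pow_pos hb0 (j - 1 - i)) t.isLt t₂.isLt h3
      simp only [Prod.mk.injEq]
      exact ⟨⟨h1, h2, Fin.ext hT, h5, h6⟩, Fin.ext hS, h4⟩
    · simp only [Fintype.card_prod, Fintype.card_fin]
      rw [← hBtBs]; ring
  rw [← map_univ_bij hEbij, Multiset.map_map]
  have hstep : ((fun x : (Fin (b ^ i * f) × Fin a × Fin (b ^ (m - 1 - i)))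
        × (Fin (b ^ j * f) × Fin a × Fin (b ^ (m - 1 - j))) =>
        pMap f b m a (b ^ m * f) i x.1 - pMap f b m a (b ^ m * f) j x.2) ∘ E)
      = fun x => (fun k r => pMap f b m a (b ^ m * f) i (E (k, r)).1
          - pMap f b m a (b ^ m * f) j (E (k, r)).2) x.1 x.2 := rfl
  rw [hstep, ← bind_eq_map_prod (fun k r => pMap f b m a (b ^ m * f) i (E (k, r)).1
    - pMap f b m a (b ^ m * f) j (E (k, r)).2)]
  have hBsKj : b ^ (m - j) * (b ^ j * f) = b ^ m * f := by
    rw [← mul_assoc, ← pow_add]; congr 2; omega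
  have hBtKi : b ^ (j - 1 - i) * (b ^ (i + 1) * f) = b ^ j * f := by
    rw [← mul_assoc, ← pow_add]; congr 2; omega
  have hinner : ∀ k ∈ (Finset.univ : Finset (Fin (b ^ i * f) × Fin a × Fin (b ^ (j - 1 - i))
      × Fin a × Fin (b ^ (m - 1 - j)))).val,
      Multiset.map (fun r : Fin (b ^ (m - j)) × Fin (b ^ j * f) =>
          pMap f b m a (b ^ m * f) i (E (k, r)).1 - pMap f b m a (b ^ m * f) j (E (k, r)).2)
        (Finset.univ : Finset (Fin (b ^ (m - j)) × Fin (b ^ j * f))).val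
      = (Finset.univ : Finset (ZMod (b ^ m * f))).val := by
    rintro ⟨u, v, t, v', w'⟩ -
    apply map_univ_bij
    rw [Fintype.bijective_iff_injective_and_card]
    constructor
    · rintro ⟨s, u'⟩ ⟨s₂, u₂'⟩ heq
      simp only [hE, pMap] at heq
      have hc : ((b : ZMod (b ^ m * f)) ^ (j - 1 - i)) * (b ^ (i + 1) * f)
          = (b : ZMod (b ^ m * f)) ^ j * f := by
        have := congrArg (fun x : ℕ => (x : ZMod (b ^ m * f))) hBtKi
        push_cast at this
        exact this
      have hz : (((s : ℕ) * (b ^ j * f) + (u₂' : ℕ) : ℕ) : ZMod (b ^ m * f))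
          = (((s₂ : ℕ) * (b ^ j * f) + (u' : ℕ) : ℕ) : ZMod (b ^ m * f)) := by
        push_cast at heq ⊢
        linear_combination heq
          + (((s₂ : ℕ) : ZMod (b ^ m * f)) - ((s : ℕ) : ZMod (b ^ m * f))) * hc
      have hlt1 : (s : ℕ) * (b ^ j * f) + (u₂' : ℕ) < b ^ m * f := by
        have h1 : ((s : ℕ) + 1) * (b ^ j * f) ≤ b ^ (m - j) * (b ^ j * f) :=
          Nat.mul_le_mul_right _ s.isLt
        have := u₂'.isLt
        nlinarith
      have hlt2 : (s₂ : ℕ) * (b ^ j * f) + (u' : ℕ) < b ^ m * f := by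
        have h1 : ((s₂ : ℕ) + 1) * (b ^ j * f) ≤ b ^ (m - j) * (b ^ j * f) :=
          Nat.mul_le_mul_right _ s₂.isLt
        have := u'.isLt
        nlinarith
      have hnat : (s : ℕ) * (b ^ j * f) + (u₂' : ℕ) = (s₂ : ℕ) * (b ^ j * f) + (u' : ℕ) := by
        have := congrArg ZMod.val hz
        rwa [ZMod.val_cast_of_lt hlt1, ZMod.val_cast_of_lt hlt2] at this
      have hKj : 0 < b ^ j * f := Nat.mul_pos (pow_pos hb0 j) hf0
      obtain ⟨hu, hs⟩ := digit_unique hKj u₂'.isLt u'.isLt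
        (show (u₂' : ℕ) + (s : ℕ) * (b ^ j * f) = (u' : ℕ) + (s₂ : ℕ) * (b ^ j * f) by omega)
      simp only [Prod.mk.injEq]
      exact ⟨Fin.ext hs, Fin.ext hu.symm⟩
    · simp only [Fintype.card_prod, Fintype.card_fin, ZMod.card]
      rw [← hBsKj]
  rw [Multiset.bind_congr hinner, bind_const']
  congr 1
  have : Multiset.card (Finset.univ : Finset (Fin (b ^ i * f) × Fin a × Fin (b ^ (j - 1 - i))
      × Fin a × Fin (b ^ (m - 1 - j)))).val
      = (b ^ i * f) * (a * (b ^ (j - 1 - i) * (a * b ^ (m - 1 - j)))) := by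
    simp [Finset.card_univ]
  rw [this, show m - 2 = i + ((j - 1 - i) + (m - 1 - j)) by omega, pow_add, pow_add]
  ring

/-- for `f ≥ 1`, `b, m ≥ 2` and `1 ≤ a < b`, there exists a non-disjoint
`(bᵐf, m, a·b^{m-1}·f, a²·b^{m-2}·f)`-PSEDF in `ℤ_{bᵐf}`. -/
theorem stmt_10 (f b m a : ℕ) (hf : 1 ≤ f) (hb : 2 ≤ b) (hm : 2 ≤ m)
    (ha₁ : 1 ≤ a) (ha₂ : a < b) :
    haveI : NeZero (b ^ m * f) := ⟨(Nat.mul_pos (pow_pos (by omega) m) (by omega)).ne'⟩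
    ∃ A : Fin m → Finset (ZMod (b ^ m * f)),
      (∀ i, (A i).card = a * b ^ (m - 1) * f) ∧
      ∀ i j, i ≠ j → extDiff (A i) (A j)
        = (a ^ 2 * b ^ (m - 2) * f) • (Finset.univ : Finset (ZMod (b ^ m * f))).val := by
  haveI : NeZero (b ^ m * f) := ⟨(Nat.mul_pos (pow_pos (by omega) m) (by omega)).ne'⟩
  refine ⟨fun i => Finset.image (pMap f b m a (b ^ m * f) (i : ℕ)) Finset.univ, ?_, ?_⟩
  · intro i
    have hi : (i : ℕ) ≤ m - 1 := by have := i.isLt; omega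
    rw [Finset.card_image_of_injective _ (pMap_inj hf hb ha₂ hi hm), Finset.card_univ]
    simp only [Fintype.card_prod, Fintype.card_fin]
    have heq : b ^ (i : ℕ) * b ^ (m - 1 - (i : ℕ)) = b ^ (m - 1) := by
      rw [← pow_add]; congr 1; omega
    rw [← heq]; ring
  · intro i j hij
    rcases lt_trichotomy (i : ℕ) (j : ℕ) with h | h | h
    · exact key_lemma_s10 f b m a hf hb hm ha₂ _ _ h (by have := j.isLt; omega)
    · exact absurd (Fin.ext h) hij
    · rw [extDiff_neg, key_lemma_s10 f b m a hf hb hm ha₂ _ _ h (by have := i.isLt; omega),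
        Multiset.map_nsmul, map_univ_bij neg_involutive.bijective]
end

section
/- Let S > 1 and N > 2 be integers. Then there exists a non-disjoint (S^N, N, S^{N−1}, S^{N−2})-PSEDF in ℤ_{S^N}, and hence a non-disjoint (S^N, N, S^{N−1}, (N−1)S^{N−2})-SEDF in ℤ_{S^N}. -/
open Finset

/-- Split a count over `range (A*B)` into a double sum via `x = u + A*w`. -/
lemma split_count (A B : ℕ) (hA : 0 < A) (p : ℕ → Prop) [DecidablePred p] :
    ((range (A*B)).filter p).card
      = ∑ u ∈ range A, ((range B).filter (fun w => p (u + A*w))).card := by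
  rw [Finset.card_filter]
  have h0 : ∀ u ∈ range A, ((range B).filter (fun w => p (u + A*w))).card
      = ∑ w ∈ range B, if p (u + A*w) then 1 else 0 := fun u _ => Finset.card_filter _ _
  rw [Finset.sum_congr rfl h0, ← Finset.sum_product']
  refine Finset.sum_nbij' (fun x => (x % A, x / A)) (fun q => q.1 + A * q.2) ?_ ?_ ?_ ?_ ?_
  · intro x hx
    simp only [mem_range, mem_product] at *
    refine ⟨Nat.mod_lt _ hA, (Nat.div_lt_iff_lt_mul hA).mpr ?_⟩
    rw [mul_comm]; exact hx
  · intro q hq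
    simp only [mem_range, mem_product] at *
    calc q.1 + A * q.2 < A + A * q.2 := by omega
    _ = A * (q.2 + 1) := by ring
    _ ≤ A * B := Nat.mul_le_mul_left _ (by omega)
  · intro x hx; simp [Nat.mod_add_div]
  · intro q hq
    simp only [mem_range, mem_product] at hq
    simp [Nat.add_mul_div_left _ _ hA, Nat.div_eq_of_lt hq.1, Nat.mod_eq_of_lt hq.1]
  · intro x hx; simp [Nat.mod_add_div]

lemma mod_shift_aux (R e u : ℕ) (hR : 0 < R) (hu : u < R) :
    (u + e + (R - e % R)) % R = u := by
  obtain ⟨t, ht⟩ : ∃ t, e = e % R + R * t := ⟨e / R, (Nat.mod_add_div e R).symm⟩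
  have h2 : e % R < R := Nat.mod_lt _ hR
  have h3 : u + e + (R - e % R) = u + R * t + R := by omega
  rw [h3, Nat.add_mod_right, Nat.add_mul_mod_self_left, Nat.mod_eq_of_lt hu]

/-- Shifted residue count on one full period. -/
lemma shift_card (R P e : ℕ) (hR : 0 < R) (hP : P ≤ R) :
    ((range R).filter (fun u => (u + e) % R < P)).card = P := by
  have key : ((range R).filter (fun u => (u + e) % R < P)).card
      = ((range R).filter (fun u => u < P)).card := by
    refine Finset.card_bij' (fun u _ => (u + e) % R) (fun u _ => (u + (R - e % R)) % R)
      ?_ ?_ ?_ ?_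
    · intro u hu
      obtain ⟨h1, h2⟩ := Finset.mem_filter.mp hu
      exact Finset.mem_filter.mpr ⟨Finset.mem_range.mpr (Nat.mod_lt _ hR), h2⟩
    · intro u hu
      obtain ⟨h1, h2⟩ := Finset.mem_filter.mp hu
      have h1' := Finset.mem_range.mp h1
      have h : ((u + (R - e % R)) % R + e) % R = u := by
        rw [Nat.mod_add_mod, show u + (R - e % R) + e = u + e + (R - e % R) by omega,
          mod_shift_aux R e u hR h1']
      refine Finset.mem_filter.mpr ⟨Finset.mem_range.mpr (Nat.mod_lt _ hR), ?_⟩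
      rw [h]; exact h2
    · intro u hu
      obtain ⟨h1, h2⟩ := Finset.mem_filter.mp hu
      have h1' := Finset.mem_range.mp h1
      show ((u + e) % R + (R - e % R)) % R = u
      rw [Nat.mod_add_mod, mod_shift_aux R e u hR h1']
    · intro u hu
      obtain ⟨h1, h2⟩ := Finset.mem_filter.mp hu
      have h1' := Finset.mem_range.mp h1
      show ((u + (R - e % R)) % R + e) % R = u
      rw [Nat.mod_add_mod, show u + (R - e % R) + e = u + e + (R - e % R) by omega,
        mod_shift_aux R e u hR h1']
  rw [key]
  have h2 : (range R).filter (fun u => u < P) = range P := by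
    ext x; simp only [mem_filter, mem_range]; omega
  rw [h2, card_range]

/-- Shifted residue count on `Q` full periods. -/
lemma mod_block_card (R Q P e : ℕ) (hR : 0 < R) (hP : P ≤ R) :
    ((range (R*Q)).filter (fun t => (t + e) % R < P)).card = P * Q := by
  rw [split_count R Q hR]
  have h1 : ∀ u ∈ range R, ((range Q).filter (fun w => (u + R*w + e) % R < P)).card
      = if (u + e) % R < P then Q else 0 := by
    intro u _
    have hc : ∀ w, (u + R*w + e) % R = (u + e) % R := by
      intro w
      rw [show u + R*w + e = (u + e) + R*w by omega, Nat.add_mul_mod_self_left]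
    simp only [hc]
    split_ifs with h
    · rw [Finset.filter_true_of_mem (fun _ _ => h), card_range]
    · rw [Finset.filter_false_of_mem (fun _ _ => h), card_empty]
  rw [Finset.sum_congr rfl h1, Finset.sum_ite, Finset.sum_const, Finset.sum_const,
    smul_eq_mul, smul_eq_mul, mul_zero, add_zero, shift_card R P e hR hP, mul_comm]

/-- Master count: a shifted digit-vanishing condition has uniform count over full ranges. -/
lemma master (SS P Q e : ℕ) (hS : 0 < SS) (hP : 0 < P) :
    ((range (P*SS*Q)).filter (fun t => (t + e) / P % SS = 0)).card = P * Q := by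
  have hcond : ∀ t, ((t + e) / P % SS = 0) ↔ ((t + e) % (P * SS) < P) := by
    intro t
    rw [← Nat.mod_mul_right_div_self, Nat.div_eq_zero_iff_lt hP]
  rw [Finset.filter_congr (fun t _ => by rw [hcond]), show P*SS*Q = (P*SS)*Q from rfl]
  exact mod_block_card (P*SS) Q P e (by positivity) (Nat.le_mul_of_pos_right _ hS)

lemma pow_split (S a b : ℕ) : S^(a+b) = S^a * S^b := pow_add S a b

/-- The main counting lemma: for distinct digit positions `i j < N`, the number of
`x < S^N` with `i`-th digit zero and `j`-th digit of `x+c` zero is `S^(N-2)`. -/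
lemma main_nat (S N i j c : ℕ) (hS : 1 < S) (hi : i < N) (hj : j < N) (hij : i ≠ j) :
    ((range (S^N)).filter
      (fun x => x / S^i % S = 0 ∧ (x + c) / S^j % S = 0)).card = S^(N-2) := by
  have hS0 : 0 < S := by omega
  rcases Nat.lt_or_ge j i with hlt | hge
  · -- case j < i
    rw [show S^N = S^(j+1) * S^(N-j-1) by rw [← pow_add]; congr 1; omega,
      split_count _ _ (pow_pos hS0 _)]
    have key : ∀ u ∈ range (S^(j+1)),
        ((range (S^(N-j-1))).filter (fun w =>
          (u + S^(j+1)*w)/S^i % S = 0 ∧ (u + S^(j+1)*w + c)/S^j % S = 0)).card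
        = if (u+c)/S^j % S = 0 then S^(N-j-2) else 0 := by
      intro u hu
      have hu' : u < S^(j+1) := mem_range.mp hu
      have hcong : ∀ w ∈ range (S^(N-j-1)),
          ((u + S^(j+1)*w)/S^i % S = 0 ∧ (u + S^(j+1)*w + c)/S^j % S = 0)
          ↔ ((w + 0) / S^(i-j-1) % S = 0 ∧ (u+c)/S^j % S = 0) := by
        intro w _
        have d1 : (u + S^(j+1)*w)/S^i = w / S^(i-j-1) := by
          rw [show S^i = S^(j+1) * S^(i-j-1) by rw [← pow_add]; congr 1; omega,
            ← Nat.div_div_eq_div_mul, Nat.add_mul_div_left _ _ (pow_pos hS0 _),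
            Nat.div_eq_of_lt hu', zero_add]
        have d2 : (u + S^(j+1)*w + c)/S^j % S = (u+c)/S^j % S := by
          rw [show u + S^(j+1)*w + c = (u+c) + S^j*(S*w) by rw [pow_succ]; ring,
            Nat.add_mul_div_left _ _ (pow_pos hS0 _), Nat.add_mul_mod_self_left]
        rw [d1, d2, add_zero]
      rw [filter_congr hcong]
      by_cases h : (u+c)/S^j % S = 0
      · simp only [h, and_true, if_pos]
        have hm := master S (S^(i-j-1)) (S^(N-i-1)) 0 hS0 (pow_pos hS0 _)
        rw [show S^(i-j-1)*S*S^(N-i-1) = S^(N-j-1) by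
            rw [← pow_succ, ← pow_add]; congr 1; omega] at hm
        rw [hm, ← pow_add]; congr 1; omega
      · simp [h]
    rw [Finset.sum_congr rfl key, Finset.sum_ite, sum_const, sum_const, smul_eq_mul,
      smul_eq_mul, mul_zero, add_zero]
    have hm := master S (S^j) 1 c hS0 (pow_pos hS0 _)
    rw [show S^j*S*1 = S^(j+1) by rw [mul_one, ← pow_succ], mul_one] at hm
    rw [hm, ← pow_add]; congr 1; omega
  · -- case i < j
    have hlt : i < j := by omega
    rw [show S^N = S^(i+1) * S^(N-i-1) by rw [← pow_add]; congr 1; omega,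
      split_count _ _ (pow_pos hS0 _)]
    have key : ∀ u ∈ range (S^(i+1)),
        ((range (S^(N-i-1))).filter (fun w =>
          (u + S^(i+1)*w)/S^i % S = 0 ∧ (u + S^(i+1)*w + c)/S^j % S = 0)).card
        = if u/S^i % S = 0 then S^(N-i-2) else 0 := by
      intro u hu
      have hu' : u < S^(i+1) := mem_range.mp hu
      have hcong : ∀ w ∈ range (S^(N-i-1)),
          ((u + S^(i+1)*w)/S^i % S = 0 ∧ (u + S^(i+1)*w + c)/S^j % S = 0)
          ↔ (u/S^i % S = 0 ∧ (w + (u+c)/S^(i+1)) / S^(j-i-1) % S = 0) := by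
        intro w _
        have d1 : (u + S^(i+1)*w)/S^i % S = u/S^i % S := by
          rw [show u + S^(i+1)*w = u + S^i*(S*w) by rw [pow_succ]; ring,
            Nat.add_mul_div_left _ _ (pow_pos hS0 _), Nat.add_mul_mod_self_left]
        have d2 : (u + S^(i+1)*w + c)/S^j = (w + (u+c)/S^(i+1))/S^(j-i-1) := by
          rw [show S^j = S^(i+1) * S^(j-i-1) by rw [← pow_add]; congr 1; omega,
            ← Nat.div_div_eq_div_mul,
            show u + S^(i+1)*w + c = (u+c) + S^(i+1)*w by omega,
            Nat.add_mul_div_left _ _ (pow_pos hS0 _), add_comm]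
        rw [d1, d2]
      rw [filter_congr hcong]
      by_cases h : u/S^i % S = 0
      · simp only [h, true_and, if_pos]
        have hm := master S (S^(j-i-1)) (S^(N-j-1)) ((u+c)/S^(i+1)) hS0 (pow_pos hS0 _)
        rw [show S^(j-i-1)*S*S^(N-j-1) = S^(N-i-1) by
            rw [← pow_succ, ← pow_add]; congr 1; omega] at hm
        rw [hm, ← pow_add]; congr 1; omega
      · simp [h]
    rw [Finset.sum_congr rfl key, Finset.sum_ite, sum_const, sum_const, smul_eq_mul,
      smul_eq_mul, mul_zero, add_zero]
    have hcong0 : ∀ u ∈ range (S^(i+1)), (u/S^i % S = 0) ↔ ((u+0)/S^i % S = 0) := by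
      intro u _; rw [add_zero]
    rw [filter_congr hcong0]
    have hm := master S (S^i) 1 0 hS0 (pow_pos hS0 _)
    rw [show S^i*S*1 = S^(i+1) by rw [mul_one, ← pow_succ], mul_one] at hm
    rw [hm, ← pow_add]; congr 1; omega

/-- Reducing mod `S^N` does not change digits below position `N`. -/
lemma digit_mod (S N j : ℕ) (hS : 0 < S) (hj : j < N) (m : ℕ) :
    (m % S^N) / S^j % S = m / S^j % S := by
  have h1 : m = m % S^N + S^j * (S^(N-j) * (m / S^N)) := by
    rw [← mul_assoc, ← pow_add, show j + (N-j) = N by omega]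
    exact (Nat.mod_add_div m (S^N)).symm
  conv_rhs => rw [h1]
  rw [Nat.add_mul_div_left _ _ (pow_pos hS _),
    show S^(N-j) * (m/S^N) = S * (S^(N-j-1) * (m/S^N)) by
      rw [← mul_assoc, ← pow_succ']; congr 2; omega,
    Nat.add_mul_mod_self_left]

/-- for integers `S > 1` and `N > 2` there exists a non-disjoint
`(S^N, N, S^{N-1}, S^{N-2})`-PSEDF in `ℤ_{S^N}`, and hence a non-disjoint
`(S^N, N, S^{N-1}, (N-1)·S^{N-2})`-SEDF in `ℤ_{S^N}`. -/
theorem stmt_11 (S N : ℕ) (hS : 1 < S) (hN : 2 < N) :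
    haveI : NeZero (S ^ N) := ⟨(pow_pos (by omega) N).ne'⟩
    ∃ A : Fin N → Finset (ZMod (S ^ N)),
      (∀ i, (A i).card = S ^ (N - 1)) ∧
      (∀ i j, i ≠ j → extDiff (A i) (A j)
        = S ^ (N - 2) • (Finset.univ : Finset (ZMod (S ^ N))).val) ∧
      (∀ i, ∑ j ∈ Finset.univ.erase i, extDiff (A i) (A j)
        = ((N - 1) * S ^ (N - 2)) • (Finset.univ : Finset (ZMod (S ^ N))).val) := by
  have hS0 : 0 < S := by omega
  have hv : 0 < S ^ N := pow_pos hS0 N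
  haveI : NeZero (S ^ N) := ⟨hv.ne'⟩
  set A : Fin N → Finset (ZMod (S ^ N)) := fun i =>
    ((range (S^N)).filter (fun x => x / S^(i:ℕ) % S = 0)).image
      (fun x : ℕ => (x : ZMod (S^N))) with hA
  have hinj : Set.InjOn (fun x : ℕ => (x : ZMod (S^N))) (range (S^N)) := by
    intro x hx y hy h
    have hx' : x < S^N := mem_range.mp hx
    have hy' : y < S^N := mem_range.mp hy
    calc x = ((x : ZMod (S^N))).val := (ZMod.val_cast_of_lt hx').symm
    _ = ((y : ZMod (S^N))).val := by rw [show ((x : ℕ) : ZMod (S^N)) = (y : ℕ) from h]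
    _ = y := ZMod.val_cast_of_lt hy'
  -- cardinality
  have h1 : ∀ i, (A i).card = S ^ (N - 1) := by
    intro i
    rw [hA, Finset.card_image_of_injOn (hinj.mono (by
      intro x hx
      simp only [Finset.coe_filter, Set.mem_setOf_eq] at hx
      exact hx.1))]
    rw [filter_congr (fun x _ => show (x / S^(i:ℕ) % S = 0) ↔ ((x+0) / S^(i:ℕ) % S = 0) by
      rw [add_zero])]
    rw [show S^N = S^(i:ℕ)*S*S^(N-(i:ℕ)-1) by
      rw [← pow_succ, ← pow_add]; congr 1; have := i.isLt; omega]
    rw [master S _ _ 0 hS0 (pow_pos hS0 _), ← pow_add]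
    congr 1; have := i.isLt; omega
  -- pairwise external differences
  have h2 : ∀ i j, i ≠ j → extDiff (A i) (A j)
      = S ^ (N - 2) • (Finset.univ : Finset (ZMod (S ^ N))).val := by
    intro i j hij
    rw [Multiset.ext]
    intro g
    rw [Multiset.count_nsmul,
      Multiset.count_eq_one_of_mem (Finset.univ.nodup) (Finset.mem_univ g), mul_one]
    simp only [extDiff]
    rw [Multiset.count_bind]
    have hcount : ∀ a : ZMod (S^N),
        Multiset.count g ((A j).val.map (fun b => a - b))
        = if a - g ∈ A j then 1 else 0 := by
      intro a
      rw [Multiset.count_map]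
      have hfil : ((A j).val.filter (fun b => g = a - b))
          = ((A j).val.filter (fun b => (a - g) = b)) := by
        apply Multiset.filter_congr
        intro b _
        constructor
        · intro h; rw [h, sub_sub_cancel]
        · intro h; rw [← h, sub_sub_cancel]
      rw [hfil, ← Multiset.count_eq_card_filter_eq]
      by_cases hm : a - g ∈ A j
      · rw [Multiset.count_eq_one_of_mem (A j).nodup hm, if_pos hm]
      · rw [Multiset.count_eq_zero_of_notMem hm, if_neg hm]
    rw [Multiset.map_congr rfl (fun a _ => hcount a)]
    have hsum : (((A i).val.map (fun a => if a - g ∈ A j then 1 else 0)).sum : ℕ)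
        = ∑ a ∈ A i, (if a - g ∈ A j then 1 else 0) := rfl
    rw [hsum, ← Finset.card_filter]
    -- now reduce to nat counting
    rw [hA]
    rw [Finset.filter_image, Finset.card_image_of_injOn (hinj.mono (by
      intro x hx
      simp only [Finset.coe_filter, Set.mem_setOf_eq, Finset.mem_filter] at hx
      exact hx.1.1)), Finset.filter_filter]
    set c := (-g).val with hc
    have hmem : ∀ x, x < S^N →
        (((x : ZMod (S^N)) - g) ∈ A j ↔ ((x + c) % S^N) / S^(j:ℕ) % S = 0) := by
      intro x hx
      have hval : ((x : ZMod (S^N)) - g).val = (x + c) % S^N := by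
        rw [sub_eq_add_neg, ZMod.val_add, ZMod.val_cast_of_lt hx]
      constructor
      · intro hm
        obtain ⟨y, hy, hyx⟩ := Finset.mem_image.mp hm
        obtain ⟨hy1, hy2⟩ := Finset.mem_filter.mp hy
        have hyv : y = ((x : ZMod (S^N)) - g).val := by
          rw [← hyx]; exact (ZMod.val_cast_of_lt (mem_range.mp hy1)).symm
        rw [hval] at hyv
        rw [← hyv]; exact hy2
      · intro h
        refine Finset.mem_image.mpr ⟨((x : ZMod (S^N)) - g).val, ?_, ZMod.natCast_rightInverse _⟩
        refine Finset.mem_filter.mpr ⟨mem_range.mpr (ZMod.val_lt _), ?_⟩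
        rw [hval]; exact h
    rw [filter_congr (fun x hx =>
      show (x / S^(i:ℕ) % S = 0 ∧ ((x : ZMod (S^N)) - g) ∈ A j)
        ↔ (x / S^(i:ℕ) % S = 0 ∧ (x + c) / S^(j:ℕ) % S = 0) by
      rw [hmem x (mem_range.mp hx), digit_mod S N (j:ℕ) hS0 j.isLt])]
    exact main_nat S N (i:ℕ) (j:ℕ) c hS i.isLt j.isLt (fun h => hij (Fin.ext h))
  refine ⟨A, h1, h2, ?_⟩
  intro i
  rw [Finset.sum_congr rfl (fun j hj => h2 i j (Ne.symm (Finset.mem_erase.mp hj).1)),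
    Finset.sum_const, Finset.card_erase_of_mem (Finset.mem_univ i), Finset.card_univ,
    Fintype.card_fin, smul_smul]
end

section
/- Let v ∈ ℕ and let a_1, …, a_m be pairwise coprime divisors of v (m ≥ 2). Then for any natural numbers μ_1, …, μ_m with 1 ≤ μ_i ≤ a_i, there exists a non-disjoint (v, m, μ_1·v/a_1, …, μ_m·v/a_m)-GPSEDF in ℤ_v. -/
open Finset Function


/-- Auxiliary: the "multiplication by `b`" homomorphism `ZMod (v/b) →+ ZMod v`. -/
def liftMul (v b : ℕ) (h : b ∣ v) : ZMod (v / b) →+ ZMod v :=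
  ZMod.lift (v / b) ⟨(AddMonoidHom.mulLeft (b : ZMod v)).comp (Int.castAddHom (ZMod v)), by
    simp only [AddMonoidHom.comp_apply, Int.coe_castAddHom, AddMonoidHom.coe_mulLeft]
    rw [Int.cast_natCast, ← Nat.cast_mul, Nat.mul_div_cancel' h, ZMod.natCast_self]⟩

lemma liftMul_intCast (v b : ℕ) (h : b ∣ v) (z : ℤ) :
    liftMul v b h (z : ZMod (v / b)) = (b : ZMod v) * z := by
  simp [liftMul]

lemma liftMul_natCast (v b : ℕ) (h : b ∣ v) (n : ℕ) :
    liftMul v b h (n : ZMod (v / b)) = ((b * n : ℕ) : ZMod v) := by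
  have := liftMul_intCast v b h (n : ℤ)
  push_cast at this ⊢
  simpa using this

lemma liftMul_injective (v b : ℕ) (hv : 0 < v) (hb : b ∣ v) (hb0 : 0 < b) :
    Injective (liftMul v b hb) := by
  have hvb : 0 < v / b := Nat.div_pos (Nat.le_of_dvd hv hb) hb0
  haveI : NeZero (v / b) := ⟨hvb.ne'⟩
  rw [injective_iff_map_eq_zero]
  intro x hx
  have hxv : x = ((x.val : ℕ) : ZMod (v / b)) := (ZMod.natCast_rightInverse x).symm
  rw [hxv, liftMul_natCast] at hx
  rw [ZMod.natCast_eq_zero_iff] at hx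
  have hlt : b * x.val < v := by
    calc b * x.val < b * (v / b) := (Nat.mul_lt_mul_left hb0).mpr (ZMod.val_lt x)
    _ = v := Nat.mul_div_cancel' hb
  have h0 : b * x.val = 0 := Nat.eq_zero_of_dvd_of_lt hx hlt
  have : x.val = 0 := by
    rcases Nat.mul_eq_zero.mp h0 with h' | h'
    · omega
    · exact h'
  rw [hxv, this, Nat.cast_zero]

lemma fiber_card_of_surjective {G H : Type*} [AddCommGroup G] [AddCommGroup H] [Fintype G]
    [Fintype H] [DecidableEq H] (φ : G →+ H) (hs : Surjective φ) (t : H) :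
    Fintype.card {g : G // φ g = t} * Fintype.card H = Fintype.card G := by
  have key : ∀ s u : H, Fintype.card {g : G // φ g = s} = Fintype.card {g : G // φ g = u} := by
    intro s u
    obtain ⟨d, hd⟩ := hs (u - s)
    exact Fintype.card_congr
      { toFun := fun g => ⟨g.1 + d, by rw [map_add, g.2, hd]; abel⟩
        invFun := fun g => ⟨g.1 - d, by rw [map_sub, g.2, hd]; abel⟩
        left_inv := fun g => by ext; simp
        right_inv := fun g => by ext; simp }
  have h1 : Fintype.card G = ∑ s : H, Fintype.card {g : G // φ g = s} := by
    rw [← Fintype.card_sigma]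
    exact (Fintype.card_congr (Equiv.sigmaFiberEquiv φ)).symm
  rw [h1, Finset.sum_congr rfl (fun s _ => key s t), Finset.sum_const, smul_eq_mul,
    Finset.card_univ, mul_comm]

lemma count_extDiff_map {α β G : Type*} [AddGroup G] [Fintype α] [Fintype β]
    [DecidableEq G] (f : α ↪ G) (g : β ↪ G) (t : G) :
    Multiset.count t (extDiff (Finset.map f univ) (Finset.map g univ))
      = Fintype.card {p : α × β // f p.1 - g p.2 = t} := by
  classical
  have hcard : Fintype.card {p : α × β // f p.1 - g p.2 = t}
      = ∑ x : α, Fintype.card {y : β // f x - g y = t} := by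
    rw [← Fintype.card_sigma]
    exact Fintype.card_congr (Equiv.subtypeProdEquivSigmaSubtype (fun x y => f x - g y = t))
  rw [hcard, extDiff]
  simp only [Finset.map_val, Multiset.bind_map, Multiset.count_bind, Multiset.map_map,
    Function.comp]
  have : ∀ x : α, Multiset.count t (Multiset.map (fun b => f x - g b) (univ.val : Multiset β))
      = Fintype.card {y : β // f x - g y = t} := by
    intro x
    rw [Multiset.count_map, Fintype.card_subtype]
    have heq : Multiset.filter (fun y => t = f x - g y) (univ.val : Multiset β)
        = (univ.filter (fun y => f x - g y = t)).val := by
      rw [Finset.filter_val]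
      exact Multiset.filter_congr (fun y _ => eq_comm)
    rw [heq]
    rfl
  rw [Multiset.map_congr rfl (fun x _ => this x)]
  rfl

/-- let `a₁,…,a_m` (`m ≥ 2`) be pairwise coprime divisors of `v`.  For any
`1 ≤ μᵢ ≤ aᵢ` there exists a non-disjoint `(v, m, μ₁·v/a₁, …, μ_m·v/a_m)`-GPSEDF
in `ℤ_v`. -/
theorem stmt_13 (v m : ℕ) (hv : 0 < v) (hm : 2 ≤ m) (a : Fin m → ℕ)
    (hdvd : ∀ i, a i ∣ v) (hcop : ∀ i j, i ≠ j → Nat.Coprime (a i) (a j))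
    (μ : Fin m → ℕ) (hμ₁ : ∀ i, 1 ≤ μ i) (hμ₂ : ∀ i, μ i ≤ a i) :
    haveI : NeZero v := ⟨hv.ne'⟩
    ∃ A : Fin m → Finset (ZMod v),
      (∀ i, (A i).card = μ i * (v / a i)) ∧
      ∀ i j, i ≠ j → ∃ lam : ℕ,
        lam * v = (μ i * (v / a i)) * (μ j * (v / a j)) ∧
        extDiff (A i) (A j) = lam • (Finset.univ : Finset (ZMod v)).val := by
  haveI : NeZero v := ⟨hv.ne'⟩
  have ha : ∀ i, 0 < a i := fun i => Nat.pos_of_dvd_of_pos (hdvd i) hv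
  haveI hnz : ∀ i, NeZero (v / a i) :=
    fun i => ⟨(Nat.div_pos (Nat.le_of_dvd hv (hdvd i)) (ha i)).ne'⟩
  -- the translation homs
  set φ : ∀ i, ZMod (v / a i) →+ ZMod v := fun i => liftMul v (a i) (hdvd i) with hφ
  -- reduction mod a i
  have hπφ : ∀ i (x : ZMod (v / a i)),
      (ZMod.castHom (hdvd i) (ZMod (a i))) (φ i x) = 0 := by
    intro i x
    have hx : x = ((x.val : ℕ) : ZMod (v / a i)) := (ZMod.natCast_rightInverse x).symm
    rw [hx, hφ, liftMul_natCast, map_natCast]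
    rw [Nat.cast_mul, ZMod.natCast_self, zero_mul]
  -- the embedding defining A i
  have hinj : ∀ i, Injective
      (fun p : Fin (μ i) × ZMod (v / a i) => ((p.1 : ℕ) : ZMod v) + φ i p.2) := by
    intro i p q h
    simp only at h
    have h2 := congrArg (ZMod.castHom (hdvd i) (ZMod (a i))) h
    rw [map_add, map_add, hπφ, hπφ, add_zero, add_zero, map_natCast, map_natCast] at h2
    have hval : ((p.1 : ℕ) : ZMod (a i)).val = ((q.1 : ℕ) : ZMod (a i)).val := by rw [h2]
    rw [ZMod.val_cast_of_lt (lt_of_lt_of_le p.1.isLt (hμ₂ i)),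
      ZMod.val_cast_of_lt (lt_of_lt_of_le q.1.isLt (hμ₂ i))] at hval
    have h1 : p.1 = q.1 := Fin.ext hval
    have h3 : φ i p.2 = φ i q.2 := by
      have : ((p.1 : ℕ) : ZMod v) = ((q.1 : ℕ) : ZMod v) := by rw [hval]
      rw [this] at h
      exact add_left_cancel h
    have h4 : p.2 = q.2 := liftMul_injective v (a i) hv (hdvd i) (ha i) h3
    exact Prod.ext h1 h4
  refine ⟨fun i => Finset.map ⟨_, hinj i⟩ univ, ?_, ?_⟩
  · intro i
    rw [Finset.card_map, Finset.card_univ, Fintype.card_prod, Fintype.card_fin, ZMod.card]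
  · intro i j hij
    have hab : a i * a j ∣ v := (hcop i j hij).mul_dvd_of_dvd_of_dvd (hdvd i) (hdvd j)
    set w := v / (a i * a j) with hw
    have hvw : v = a i * a j * w := (Nat.mul_div_cancel' hab).symm
    have hdi : v / a i = a j * w := by
      rw [hvw]; rw [mul_assoc, Nat.mul_div_cancel_left _ (ha i)]
    have hdj : v / a j = a i * w := by
      rw [hvw]
      rw [show a i * a j * w = a j * (a i * w) by ring, Nat.mul_div_cancel_left _ (ha j)]
    refine ⟨μ i * μ j * w, by rw [hdi, hdj]; nth_rewrite 1 [hvw]; ring, ?_⟩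
    -- the combined hom on the product
    set ψ : (ZMod (v / a i) × ZMod (v / a j)) →+ ZMod v :=
      (φ i).comp (AddMonoidHom.fst _ _) - (φ j).comp (AddMonoidHom.snd _ _) with hψ
    have hψ_apply : ∀ x y, ψ (x, y) = φ i x - φ j y := by
      intro x y
      simp [hψ, AddMonoidHom.sub_apply]
    -- ψ is surjective
    have hsurj : Surjective ψ := by
      intro t
      obtain ⟨z, hz⟩ := ZMod.intCast_surjective (n := v) t
      have hbez : (1 : ℤ) = (a i) * Int.gcdA (a i) (a j) + (a j) * Int.gcdB (a i) (a j) := by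
        have := Int.gcd_eq_gcd_ab (a i) (a j)
        have hg : Int.gcd (a i) (a j) = 1 := by
          have := hcop i j hij
          simpa [Int.gcd_natCast_natCast] using this
        rw [hg] at this
        exact_mod_cast this
      refine ⟨(((z * Int.gcdA (a i) (a j) : ℤ) : ZMod (v / a i)),
        ((-(z * Int.gcdB (a i) (a j)) : ℤ) : ZMod (v / a j))), ?_⟩
      rw [hψ_apply, hφ, liftMul_intCast, liftMul_intCast, ← hz]
      push_cast
      have hbez' : (1 : ZMod v) = (a i : ZMod v) * (Int.gcdA (a i) (a j) : ZMod v)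
          + (a j : ZMod v) * (Int.gcdB (a i) (a j) : ZMod v) := by
        exact_mod_cast congrArg (fun x : ℤ => (x : ZMod v)) hbez
      linear_combination (-(z : ZMod v)) * hbez'
    -- all fibers of ψ have cardinality w
    have hfiber : ∀ t : ZMod v,
        Fintype.card {g : ZMod (v / a i) × ZMod (v / a j) // ψ g = t} = w := by
      intro t
      have h1 := fiber_card_of_surjective ψ hsurj t
      rw [Fintype.card_prod, ZMod.card, ZMod.card, ZMod.card] at h1
      have h2 : w * v = v / a i * (v / a j) := by
        rw [hdi, hdj]; nth_rewrite 1 [hvw]; ring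
      exact Nat.eq_of_mul_eq_mul_right hv (h1.trans h2.symm)
    -- conclude the multiset identity
    rw [Multiset.ext]
    intro t
    rw [Multiset.count_nsmul, Multiset.count_univ, mul_one, count_extDiff_map]
    -- the big fiber count
    have hbig : Fintype.card
        {p : (Fin (μ i) × ZMod (v / a i)) × (Fin (μ j) × ZMod (v / a j)) //
          (((p.1.1 : ℕ) : ZMod v) + φ i p.1.2) - (((p.2.1 : ℕ) : ZMod v) + φ j p.2.2) = t}
        = μ i * μ j * w := by
      have e1 : {p : (Fin (μ i) × ZMod (v / a i)) × (Fin (μ j) × ZMod (v / a j)) //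
          (((p.1.1 : ℕ) : ZMod v) + φ i p.1.2) - (((p.2.1 : ℕ) : ZMod v) + φ j p.2.2) = t}
          ≃ {q : (Fin (μ i) × Fin (μ j)) × (ZMod (v / a i) × ZMod (v / a j)) //
            ψ q.2 = t - (((q.1.1 : ℕ) : ZMod v) - ((q.1.2 : ℕ) : ZMod v))} := by
        refine Equiv.subtypeEquiv
          (Equiv.prodProdProdComm (Fin (μ i)) (ZMod (v / a i)) (Fin (μ j)) (ZMod (v / a j)))
          (fun p => ?_)
        simp only [Equiv.prodProdProdComm_apply, hψ_apply]
        constructor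
        · intro h; linear_combination h
        · intro h; linear_combination h
      rw [Fintype.card_congr e1,
        Fintype.card_congr (Equiv.subtypeProdEquivSigmaSubtype
          (fun (c : Fin (μ i) × Fin (μ j)) (g : ZMod (v / a i) × ZMod (v / a j)) =>
            ψ g = t - (((c.1 : ℕ) : ZMod v) - ((c.2 : ℕ) : ZMod v)))),
        Fintype.card_sigma]
      rw [Finset.sum_congr rfl (fun c _ => hfiber (t - (((c.1 : ℕ) : ZMod v) - ((c.2 : ℕ) : ZMod v))))]
      rw [Finset.sum_const, smul_eq_mul, Finset.card_univ, Fintype.card_prod,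
        Fintype.card_fin, Fintype.card_fin]
    exact hbig
end

section
/- Let G be a finite group of order v (written multiplicatively, not necessarily abelian) and let H_1, …, H_m be distinct subgroups of G such that H_iH_j = G for all pairs i ≠ j. Then {H_1, …, H_m} is a non-disjoint (v, m, |H_1|, …, |H_m|)-GPSEDF in G: for all i ≠ j, the multiset Δ(H_i, H_j) = {xy^{−1} : x ∈ H_i, y ∈ H_j} consists of exactly |H_i ∩ H_j| copies of each element of G. -/
open Pointwise

/-- The external difference multiset `Δ(A,B) = {ab⁻¹ : a ∈ A, b ∈ B}` (with multiplicity),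
for a multiplicatively written group. -/
def extDiffMul {G : Type*} [Group G] (A B : Finset G) : Multiset G :=
  A.val.bind fun a => B.val.map fun b => a * b⁻¹

/-- let `H₁,…,H_m` be distinct subgroups of a finite (not necessarily
abelian) group `G` with `HᵢHⱼ = G` for all `i ≠ j`.  Then `{H₁,…,H_m}` is a non-disjoint
`(|G|, m, |H₁|, …, |H_m|)`-GPSEDF: for all `i ≠ j`, the multiset `Δ(Hᵢ,Hⱼ)` consists of
exactly `|Hᵢ ∩ Hⱼ|` copies of each element of `G`.  (Here `Aᵢ` is the finset of elements
of the subgroup `Hᵢ`.) -/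
theorem stmt_14 {G : Type*} [Group G] [Fintype G] [DecidableEq G]
    (m : ℕ) (hm : 1 < m) (H : Fin m → Subgroup G) (A : Fin m → Finset G)
    (hA : ∀ i, (A i : Set G) = (H i : Set G))
    (hdist : ∀ i j, i ≠ j → H i ≠ H j)
    (hprod : ∀ i j, i ≠ j → (H i : Set G) * (H j : Set G) = Set.univ) :
    ∀ i j, i ≠ j →
      extDiffMul (A i) (A j) = (A i ∩ A j).card • (Finset.univ : Finset G).val := by
  intro i j hij
  have hAi : ∀ a : G, a ∈ A i ↔ a ∈ H i := by
    intro a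
    have := hA i
    rw [Set.ext_iff] at this
    simpa using this a
  have hAj : ∀ a : G, a ∈ A j ↔ a ∈ H j := by
    intro a
    have := hA j
    rw [Set.ext_iff] at this
    simpa using this a
  ext g
  -- decompose g = h * k with h ∈ H i, k ∈ H j
  have hg : g ∈ (H i : Set G) * (H j : Set G) := by
    rw [hprod i j hij]; trivial
  obtain ⟨h, hh, k, hk, hhk⟩ := hg
  -- RHS count
  rw [Multiset.count_nsmul, Multiset.count_eq_one_of_mem Finset.univ.nodup
    (Finset.mem_univ g), mul_one]
  -- LHS count
  rw [extDiffMul, Multiset.count_bind]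
  have hmap : ∀ a : G, Multiset.count g ((A j).val.map fun b => a * b⁻¹)
      = if g⁻¹ * a ∈ A j then 1 else 0 := by
    intro a
    have hinj : Function.Injective (fun b : G => a * b⁻¹) := by
      intro x y hxy
      simpa using hxy
    have hgf : g = (fun b : G => a * b⁻¹) (g⁻¹ * a) := by
      simp [mul_assoc]
    conv_lhs => rw [hgf, Multiset.count_map_eq_count' _ _ hinj]
    by_cases hmem : g⁻¹ * a ∈ A j
    · rw [if_pos hmem, Multiset.count_eq_one_of_mem (A j).nodup hmem]
    · rw [if_neg hmem, Multiset.count_eq_zero_of_notMem hmem]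
  calc ((A i).val.map fun a => Multiset.count g ((A j).val.map fun b => a * b⁻¹)).sum
      = ∑ a ∈ A i, if g⁻¹ * a ∈ A j then 1 else 0 := by
        rw [Finset.sum]
        congr 1
        exact Multiset.map_congr rfl fun a _ => hmap a
    _ = ((A i).filter fun a => g⁻¹ * a ∈ A j).card := by
        rw [Finset.card_filter]
    _ = (A i ∩ A j).card := by
        apply Finset.card_bij' (fun a _ => h⁻¹ * a) (fun z _ => h * z)
        · intro a ha
          simp only [Finset.mem_filter] at ha
          obtain ⟨ha1, ha2⟩ := ha
          rw [Finset.mem_inter, hAi, hAj]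
          constructor
          · exact (H i).mul_mem ((H i).inv_mem hh) ((hAi a).1 ha1)
          · have : h⁻¹ * a = k * (g⁻¹ * a) := by
              rw [← hhk]; group
            rw [this]
            exact (H j).mul_mem hk ((hAj _).1 ha2)
        · intro z hz
          rw [Finset.mem_inter, hAi, hAj] at hz
          simp only [Finset.mem_filter]
          constructor
          · rw [hAi]; exact (H i).mul_mem hh hz.1
          · have : g⁻¹ * (h * z) = k⁻¹ * z := by
              rw [← hhk]; group
            rw [hAj, this]
            exact (H j).mul_mem ((H j).inv_mem hk) hz.2
        · intro a _; group
        · intro z _; group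
end

section
/- Let p be a prime and let G = ℤ_p × ℤ_p. Then G has exactly p+1 subgroups of order p, and the family H of all these p+1 subgroups is a non-disjoint (p², p+1, p, 1)-PSEDF in G: for any two distinct subgroups H_i, H_j of order p, the multiset Δ(H_i, H_j) contains each element of G exactly once. -/
open AddSubgroup

private lemma smul_self_zero (p : ℕ) (g : ZMod p × ZMod p) : p • g = 0 := by
  ext <;> simp [nsmul_eq_mul]

private lemma card_zm {p : ℕ} (hp : p.Prime) {g : ZMod p × ZMod p} (hg : g ≠ 0) :
    Nat.card (zmultiples g) = p := by
  rw [Nat.card_zmultiples]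
  have h1 : addOrderOf g ∣ p := addOrderOf_dvd_of_nsmul_eq_zero (smul_self_zero p g)
  rcases hp.eq_one_or_self_of_dvd _ h1 with h | h
  · exact absurd (AddMonoid.addOrderOf_eq_one_iff.mp h) hg
  · exact h

private lemma gen_eq {p : ℕ} (hp : p.Prime) {H : AddSubgroup (ZMod p × ZMod p)}
    (hH : Nat.card H = p) {g : ZMod p × ZMod p} (hgH : g ∈ H) (hg : g ≠ 0) :
    zmultiples g = H := by
  haveI : NeZero p := ⟨hp.pos.ne'⟩
  haveI : Finite H := Subtype.finite
  exact AddSubgroup.eq_of_le_of_card_ge (zmultiples_le_of_mem hgH)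
    (by rw [hH, card_zm hp hg])

private lemma part1 {p : ℕ} (hp : p.Prime) :
    Nat.card {H : AddSubgroup (ZMod p × ZMod p) // Nat.card H = p} = p + 1 := by
  haveI : NeZero p := ⟨hp.pos.ne'⟩
  classical
  haveI : Finite (AddSubgroup (ZMod p × ZMod p)) :=
    Finite.of_injective (fun H => (H : Set (ZMod p × ZMod p))) SetLike.coe_injective
  set f : {g : ZMod p × ZMod p // g ≠ 0} → {H : AddSubgroup (ZMod p × ZMod p) // Nat.card H = p} :=
    fun g => ⟨zmultiples g.1, card_zm hp g.2⟩ with hf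
  letI iH : Fintype {H : AddSubgroup (ZMod p × ZMod p) // Nat.card H = p} := Fintype.ofFinite _
  letI ifib : ∀ H, Fintype {g : {g : ZMod p × ZMod p // g ≠ 0} // f g = H} :=
    fun H => Fintype.ofFinite _
  have hfib : ∀ H, Fintype.card {g : {g : ZMod p × ZMod p // g ≠ 0} // f g = H} = p - 1 := by
    intro H
    haveI : Fintype H.1 := Fintype.ofFinite _
    have e : {g : {g : ZMod p × ZMod p // g ≠ 0} // f g = H} ≃
        {x : H.1 // ¬ (x = 0)} :=
      { toFun := fun g => ⟨⟨g.1.1, by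
          have h : zmultiples g.1.1 = H.1 := congrArg Subtype.val g.2
          exact h ▸ mem_zmultiples _⟩, fun h => g.1.2 (congrArg Subtype.val h)⟩
        invFun := fun x => ⟨⟨(x.1 : ZMod p × ZMod p), fun h => x.2 (Subtype.ext h)⟩,
          Subtype.ext (gen_eq hp H.2 x.1.2 (fun h => x.2 (Subtype.ext h)))⟩
        left_inv := fun g => Subtype.ext (Subtype.ext rfl)
        right_inv := fun x => Subtype.ext (Subtype.ext rfl) }
    rw [← Nat.card_eq_fintype_card, Nat.card_congr e, Nat.card_eq_fintype_card,
      Fintype.card_subtype_compl, Fintype.card_subtype_eq (0 : H.1),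
      ← Nat.card_eq_fintype_card, H.2]
  have htot : Fintype.card {g : ZMod p × ZMod p // g ≠ 0} = p * p - 1 := by
    trans (Fintype.card (ZMod p × ZMod p) - 1)
    · rw [← Fintype.card_subtype_eq (0 : ZMod p × ZMod p)]
      exact Fintype.card_subtype_compl fun g => g = 0
    · rw [Fintype.card_prod, ZMod.card]
  have hsum : Fintype.card {g : ZMod p × ZMod p // g ≠ 0} =
      Fintype.card {H : AddSubgroup (ZMod p × ZMod p) // Nat.card H = p} * (p - 1) := by
    rw [Fintype.card_congr (Equiv.sigmaFiberEquiv f).symm, Fintype.card_sigma]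
    simp only [hfib, Finset.sum_const, Finset.card_univ, smul_eq_mul]
  rw [htot] at hsum
  obtain ⟨q, rfl⟩ : ∃ q, p = q + 1 := ⟨p - 1, (Nat.succ_pred_eq_of_pos hp.pos).symm⟩
  have hq : 1 ≤ q := Nat.lt_of_succ_lt_succ hp.two_le
  rw [Nat.card_eq_fintype_card]
  have harith : (q + 1) * (q + 1) - 1 = (q + 1 + 1) * q := by ring_nf; omega
  rw [harith] at hsum
  simp only [Nat.add_sub_cancel] at hsum
  exact Nat.eq_of_mul_eq_mul_right hq (hsum.symm.trans (by ring)) 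

private lemma part2 {p : ℕ} (hp : p.Prime) (H K : AddSubgroup (ZMod p × ZMod p))
    (hH : Nat.card H = p) (hK : Nat.card K = p) (hne : H ≠ K) (g : ZMod p × ZMod p) :
    Nat.card {q : (ZMod p × ZMod p) × (ZMod p × ZMod p) //
      q.1 ∈ H ∧ q.2 ∈ K ∧ q.1 - q.2 = g} = 1 := by
  haveI : NeZero p := ⟨hp.pos.ne'⟩
  -- trivial intersection
  have hinf : H ⊓ K = ⊥ := by
    by_contra hbot
    have hd := AddSubgroup.card_dvd_of_le (inf_le_left : H ⊓ K ≤ H)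
    rw [hH] at hd
    rcases hp.eq_one_or_self_of_dvd _ hd with h | h
    · exact hbot (AddSubgroup.card_eq_one.mp h)
    · have h1 : H ⊓ K = H :=
        AddSubgroup.eq_of_le_of_card_ge inf_le_left (by rw [hH, h])
      have h2 : H ⊓ K = K :=
        AddSubgroup.eq_of_le_of_card_ge inf_le_right (by rw [hK, h])
      exact hne (h1 ▸ h2)
  set F : H × K → ZMod p × ZMod p := fun z => (z.1 : ZMod p × ZMod p) - z.2 with hF
  have hinj : Function.Injective F := by
    rintro ⟨⟨x1, hx1⟩, ⟨y1, hy1⟩⟩ ⟨⟨x2, hx2⟩, ⟨y2, hy2⟩⟩ h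
    simp only [hF] at h
    have hmem : x1 - x2 ∈ H ⊓ K := by
      constructor
      · exact H.sub_mem hx1 hx2
      · have : x1 - x2 = y1 - y2 := by
          have := sub_eq_sub_iff_sub_eq_sub.mp h
          linear_combination (norm := abel) this
        rw [this]; exact K.sub_mem hy1 hy2
    rw [hinf] at hmem
    have hx : x1 = x2 := by
      have := AddSubgroup.mem_bot.mp hmem; rwa [sub_eq_zero] at this
    have hy : y1 = y2 := by
      have h' : x1 - y1 = x1 - y2 := by rw [h, hx]
      exact (sub_right_injective h').symm ▸ rfl
    simp [hx, hy]
  have hbij : Function.Bijective F := by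
    rw [Nat.bijective_iff_injective_and_card]
    refine ⟨hinj, ?_⟩
    rw [Nat.card_prod, hH, hK, Nat.card_prod, Nat.card_zmod]
  obtain ⟨z, hz, huniq⟩ := hbij.existsUnique g
  rw [Nat.card_eq_one_iff_unique]
  constructor
  · constructor
    rintro ⟨⟨a1, a2⟩, ha1, ha2, hag⟩ ⟨⟨b1, b2⟩, hb1, hb2, hbg⟩
    have h1 := huniq (⟨a1, ha1⟩, ⟨a2, ha2⟩) hag
    have h2 := huniq (⟨b1, hb1⟩, ⟨b2, hb2⟩) hbg
    have := h1.trans h2.symm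
    simp only [Prod.mk.injEq, Subtype.mk.injEq] at this
    simp [this.1, this.2]
  · exact ⟨⟨(z.1, z.2), z.1.2, z.2.2, hz⟩⟩

/-- for a prime `p`, the group `G = ℤ_p × ℤ_p` has exactly `p+1` subgroups
of order `p`, and these form a non-disjoint `(p², p+1, p, 1)`-PSEDF: for any two distinct
subgroups `H ≠ K` of order `p`, the difference multiset `Δ(H,K)` contains each element
`g` of `G` exactly once, i.e. there is exactly one pair `(x, y) ∈ H × K` with
`x - y = g`. -/
theorem stmt_15 (p : ℕ) (hp : p.Prime) :
    Nat.card {H : AddSubgroup (ZMod p × ZMod p) // Nat.card H = p} = p + 1 ∧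
    ∀ H K : AddSubgroup (ZMod p × ZMod p), Nat.card H = p → Nat.card K = p → H ≠ K →
      ∀ g : ZMod p × ZMod p,
        Nat.card {q : (ZMod p × ZMod p) × (ZMod p × ZMod p) //
          q.1 ∈ H ∧ q.2 ∈ K ∧ q.1 - q.2 = g} = 1 := by
  exact ⟨part1 hp, fun H K hH hK hne g => part2 hp H K hH hK hne g⟩
end

section
/- Let G be a finite group of order v (written multiplicatively with identity e) and let H = {H_1, …, H_m} (m ≥ 2) be a collection of subgroups of G such that |G| = |H_i||H_j| for all i ≠ j and H is a partition of G, i.e. every non-identity element of G belongs to exactly one H_i. Then: (i) for all i ≠ j, Δ(H_i, H_j) contains each element of G exactly once (so H is a non-disjoint GPSEDF with λ_{i,j} = 1 for all i ≠ j); and (ii) the family H' = {H_1∖{e}, …, H_m∖{e}} consists of pairwise disjoint sets and is a classical GEDF: the multiset union ⋃_{i≠j} Δ(H_i∖{e}, H_j∖{e}) equals λ(G∖{e}) where λ = (∑_{i≠j} (|H_i|−1)(|H_j|−1))/(v−1). -/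
lemma count_extDiffMul {G : Type*} [Group G] [DecidableEq G] (A B : Finset G) (g : G) :
    Multiset.count g (extDiffMul A B) = (A.filter fun a => g⁻¹ * a ∈ B).card := by
  unfold extDiffMul
  rw [Multiset.count_bind, Finset.card_filter, Finset.sum]
  congr 1
  apply Multiset.map_congr rfl
  intro a _
  have hinj : Function.Injective (fun b : G => a * b⁻¹) := by
    intro x y h
    simpa using h
  have key := Multiset.count_map_eq_count' (fun b : G => a * b⁻¹) B.val hinj (g⁻¹ * a)
  have e : a * (g⁻¹ * a)⁻¹ = g := by group
  rw [e] at key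
  rw [key]
  by_cases hb : g⁻¹ * a ∈ B
  · rw [Multiset.count_eq_one_of_mem B.nodup hb, if_pos hb]
  · rw [Multiset.count_eq_zero_of_notMem hb, if_neg hb]

lemma card_extDiffMul {G : Type*} [Group G] (A B : Finset G) :
    Multiset.card (extDiffMul A B) = A.card * B.card := by
  simp [extDiffMul, Multiset.card_bind, Function.comp, mul_comm]

/-- let `H₁,…,H_m` (`m ≥ 2`) be subgroups of a finite group `G` of order
`v` with `|G| = |Hᵢ||Hⱼ|` for all `i ≠ j`, forming a partition of `G` (every non-identity
element lies in exactly one `Hᵢ`).  Then (i) for `i ≠ j` the multiset `Δ(Hᵢ,Hⱼ)` contains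
each element of `G` exactly once (so the `Hᵢ` form a non-disjoint GPSEDF with
`λᵢⱼ = 1`); and (ii) the sets `Hᵢ∖{e}` are pairwise disjoint and form a classical GEDF:
`⋃_{i≠j} Δ(Hᵢ∖{e},Hⱼ∖{e}) = λ(G∖{e})` where `λ·(v-1) = ∑_{i≠j}(|Hᵢ|-1)(|Hⱼ|-1)`.
(Here `Aᵢ` is the finset of elements of the subgroup `Hᵢ`.) -/
theorem stmt_17 {G : Type*} [Group G] [Fintype G] [DecidableEq G]
    (v m : ℕ) (hv : Fintype.card G = v) (hm : 2 ≤ m)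
    (H : Fin m → Subgroup G) (A : Fin m → Finset G)
    (hA : ∀ i, (A i : Set G) = (H i : Set G))
    (hcard : ∀ i j, i ≠ j → (A i).card * (A j).card = v)
    (hpart : ∀ g : G, g ≠ 1 → ∃! i, g ∈ H i) :
    (∀ i j, i ≠ j → extDiffMul (A i) (A j) = (Finset.univ : Finset G).val) ∧
    (∀ i j, i ≠ j → Disjoint ((A i).erase 1) ((A j).erase 1)) ∧
    (∃ lam : ℕ,
      lam * (v - 1) = ∑ i, ∑ j ∈ Finset.univ.erase i, ((A i).card - 1) * ((A j).card - 1) ∧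
      ∑ i, ∑ j ∈ Finset.univ.erase i, extDiffMul ((A i).erase 1) ((A j).erase 1)
        = lam • ((Finset.univ : Finset G).erase 1).val) := by
  subst hv
  have hA' : ∀ i (g : G), g ∈ A i ↔ g ∈ H i := by
    intro i g
    rw [← Finset.mem_coe, hA i, SetLike.mem_coe]
  have htriv : ∀ i j, i ≠ j → ∀ g : G, g ∈ H i → g ∈ H j → g = 1 := by
    intro i j hij g hgi hgj
    by_contra hg
    obtain ⟨k, _, huniq⟩ := hpart g hg
    exact hij ((huniq i hgi).trans (huniq j hgj).symm)
  have hone : ∀ i, (1 : G) ∈ A i := fun i => (hA' i 1).2 (H i).one_mem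
  -- uniqueness of representation
  have hle : ∀ i j, i ≠ j → ∀ g : G,
      ((A i).filter fun a => g⁻¹ * a ∈ A j).card ≤ 1 := by
    intro i j hij g
    apply Finset.card_le_one.2
    intro a ha b hb
    simp only [Finset.mem_filter] at ha hb
    have h1 : b⁻¹ * a ∈ H i :=
      (H i).mul_mem ((H i).inv_mem ((hA' i b).1 hb.1)) ((hA' i a).1 ha.1)
    have h2 : b⁻¹ * a ∈ H j := by
      have := (H j).mul_mem ((H j).inv_mem ((hA' j _).1 hb.2)) ((hA' j _).1 ha.2)
      have e : (g⁻¹ * b)⁻¹ * (g⁻¹ * a) = b⁻¹ * a := by group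
      rwa [e] at this
    have := htriv i j hij _ h1 h2
    exact (inv_mul_eq_one.mp this).symm
  -- Part 1
  have part1 : ∀ i j, i ≠ j → extDiffMul (A i) (A j) = (Finset.univ : Finset G).val := by
    intro i j hij
    have hle' : extDiffMul (A i) (A j) ≤ (Finset.univ : Finset G).val := by
      rw [Multiset.le_iff_count]
      intro g
      rw [count_extDiffMul]
      calc ((A i).filter fun a => g⁻¹ * a ∈ A j).card ≤ 1 := hle i j hij g
        _ = Multiset.count g (Finset.univ : Finset G).val :=
          (Multiset.count_eq_one_of_mem Finset.univ.nodup (Finset.mem_univ g)).symm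
    refine Multiset.eq_of_le_of_card_le hle' ?_
    rw [card_extDiffMul, hcard i j hij]
    exact Finset.card_univ.le
  -- the unique witness characterization
  have hfull : ∀ i j, i ≠ j → ∀ g : G,
      ((A i).filter fun a => g⁻¹ * a ∈ A j).card = 1 := by
    intro i j hij g
    have := congrArg (Multiset.count g) (part1 i j hij)
    rwa [count_extDiffMul,
      Multiset.count_eq_one_of_mem Finset.univ.nodup (Finset.mem_univ g)] at this
  -- count for erased sets
  have hcount : ∀ i j, i ≠ j → ∀ g : G,
      Multiset.count g (extDiffMul ((A i).erase 1) ((A j).erase 1))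
        = if g ∈ A i ∨ g ∈ A j then 0 else 1 := by
    intro i j hij g
    rw [count_extDiffMul]
    obtain ⟨a₀, ha₀⟩ := Finset.card_eq_one.mp (hfull i j hij g)
    have ha₀mem : a₀ ∈ (A i).filter fun a => g⁻¹ * a ∈ A j := by
      rw [ha₀]; exact Finset.mem_singleton_self a₀
    simp only [Finset.mem_filter] at ha₀mem
    have hsub : ∀ a : G, a ∈ ((A i).erase 1).filter (fun a => g⁻¹ * a ∈ (A j).erase 1) →
        a = a₀ ∧ a ≠ 1 ∧ g⁻¹ * a ≠ 1 := by
      intro a ha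
      simp only [Finset.mem_filter, Finset.mem_erase] at ha
      have : a ∈ (A i).filter fun a => g⁻¹ * a ∈ A j := by
        simp only [Finset.mem_filter]; exact ⟨ha.1.2, ha.2.2⟩
      rw [ha₀, Finset.mem_singleton] at this
      exact ⟨this, ha.1.1, ha.2.1⟩
    by_cases hgi : g ∈ A i
    · -- a₀ = g, so g⁻¹ * a₀ = 1
      have hga : a₀ = g := by
        have : g ∈ (A i).filter fun a => g⁻¹ * a ∈ A j := by
          simp only [Finset.mem_filter]
          exact ⟨hgi, by simpa using hone j⟩
        rw [ha₀, Finset.mem_singleton] at this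
        exact this.symm
      rw [if_pos (Or.inl hgi), Finset.card_eq_zero, Finset.eq_empty_iff_forall_notMem]
      intro a ha
      obtain ⟨rfl, -, hne⟩ := hsub a ha
      exact hne (by rw [hga]; group)
    by_cases hgj : g ∈ A j
    · -- a₀ = 1
      have hga : a₀ = 1 := by
        have : (1 : G) ∈ (A i).filter fun a => g⁻¹ * a ∈ A j := by
          simp only [Finset.mem_filter]
          refine ⟨hone i, ?_⟩
          simpa using (hA' j _).2 ((H j).inv_mem ((hA' j g).1 hgj))
        rw [ha₀, Finset.mem_singleton] at this
        exact this.symm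
      rw [if_pos (Or.inr hgj), Finset.card_eq_zero, Finset.eq_empty_iff_forall_notMem]
      intro a ha
      obtain ⟨rfl, hne, -⟩ := hsub a ha
      exact hne hga
    · rw [if_neg (by tauto)]
      rw [Finset.card_eq_one]
      refine ⟨a₀, Finset.eq_singleton_iff_unique_mem.mpr ⟨?_, fun a ha => (hsub a ha).1⟩⟩
      have h1 : a₀ ≠ 1 := by
        rintro rfl
        apply hgj
        have : g⁻¹ ∈ A j := by simpa using ha₀mem.2
        exact (hA' j g).2 (by simpa using (H j).inv_mem ((hA' j _).1 this))
      have h2 : g⁻¹ * a₀ ≠ 1 := by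
        intro h
        apply hgi
        have : a₀ = g := by
          have := inv_mul_eq_one.mp h; exact this.symm
        rw [← this]; exact ha₀mem.1
      simp only [Finset.mem_filter, Finset.mem_erase]
      exact ⟨⟨h1, ha₀mem.1⟩, h2, ha₀mem.2⟩
  refine ⟨part1, ?_, ?_⟩
  · intro i j hij
    rw [Finset.disjoint_left]
    intro a hai haj
    rw [Finset.mem_erase] at hai haj
    exact hai.1 (htriv i j hij a ((hA' i a).1 hai.2) ((hA' j a).1 haj.2))
  · have hms : ∑ i, ∑ j ∈ Finset.univ.erase i, extDiffMul ((A i).erase 1) ((A j).erase 1)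
        = ((m - 1) * (m - 2)) • ((Finset.univ : Finset G).erase 1).val := by
      apply Multiset.ext.2
      intro g
      rw [Multiset.count_sum']
      simp_rw [Multiset.count_sum']
      rw [Multiset.count_nsmul]
      by_cases hg : g = 1
      · subst hg
        have : ∀ i : Fin m, ∀ j ∈ Finset.univ.erase i,
            Multiset.count (1:G) (extDiffMul ((A i).erase 1) ((A j).erase 1)) = 0 := by
          intro i j hj
          rw [hcount i j (Finset.ne_of_mem_erase hj).symm (1:G), if_pos (Or.inl (hone i))]
        rw [Finset.sum_congr rfl fun i _ => Finset.sum_congr rfl (this i)]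
        simp
      · obtain ⟨i₀, hi₀, huniq⟩ := hpart g hg
        have hmem : ∀ i, g ∈ A i ↔ i = i₀ := by
          intro i
          constructor
          · intro h; exact huniq i ((hA' i g).1 h)
          · rintro rfl; exact (hA' _ g).2 hi₀
        have hterm : ∀ i : Fin m, ∀ j ∈ Finset.univ.erase i,
            Multiset.count g (extDiffMul ((A i).erase 1) ((A j).erase 1))
              = if i = i₀ ∨ j = i₀ then 0 else 1 := by
          intro i j hj
          rw [hcount i j (Finset.ne_of_mem_erase hj).symm g]
          simp [hmem]
        rw [Finset.sum_congr rfl fun i _ => Finset.sum_congr rfl (hterm i)]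
        have hrhs : Multiset.count g ((Finset.univ : Finset G).erase 1).val = 1 := by
          apply Multiset.count_eq_one_of_mem ((Finset.univ : Finset G).erase 1).nodup
          exact Finset.mem_erase.mpr ⟨hg, Finset.mem_univ g⟩
        rw [hrhs, mul_one]
        -- compute the double sum
        have hinner : ∀ i : Fin m, i ≠ i₀ →
            (∑ j ∈ Finset.univ.erase i, if i = i₀ ∨ j = i₀ then 0 else 1) = m - 2 := by
          intro i hi
          have : ∀ j ∈ Finset.univ.erase i, (if i = i₀ ∨ j = i₀ then 0 else 1)
              = if j = i₀ then 0 else 1 := by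
            intro j _; simp [hi]
          rw [Finset.sum_congr rfl this]
          rw [← Finset.add_sum_erase _ _ (Finset.mem_erase.mpr ⟨Ne.symm hi, Finset.mem_univ i₀⟩)]
          rw [if_pos rfl, zero_add]
          have : ∀ j ∈ (Finset.univ.erase i).erase i₀, (if j = i₀ then 0 else 1) = 1 := by
            intro j hj
            rw [if_neg (Finset.ne_of_mem_erase hj)]
          rw [Finset.sum_congr rfl this, Finset.sum_const, smul_eq_mul, mul_one]
          rw [Finset.card_erase_of_mem (Finset.mem_erase.mpr ⟨Ne.symm hi, Finset.mem_univ i₀⟩)]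
          rw [Finset.card_erase_of_mem (Finset.mem_univ i), Finset.card_univ,
            Fintype.card_fin]
          omega
        rw [← Finset.add_sum_erase _ _ (Finset.mem_univ i₀)]
        have hz : (∑ j ∈ Finset.univ.erase i₀, if i₀ = i₀ ∨ j = i₀ then 0 else 1) = 0 := by
          apply Finset.sum_eq_zero; intro j _; simp
        rw [hz, zero_add]
        rw [Finset.sum_congr rfl fun i hi => hinner i (Finset.ne_of_mem_erase hi)]
        rw [Finset.sum_const, smul_eq_mul,
          Finset.card_erase_of_mem (Finset.mem_univ i₀), Finset.card_univ, Fintype.card_fin]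
    refine ⟨(m - 1) * (m - 2), ?_, hms⟩
    have hc := congrArg Multiset.card hms
    rw [Multiset.card_sum] at hc
    simp_rw [Multiset.card_sum, card_extDiffMul] at hc
    rw [Multiset.card_nsmul] at hc
    have e1 : ∀ i : Fin m, ((A i).erase 1).card = (A i).card - 1 := fun i =>
      Finset.card_erase_of_mem (hone i)
    simp_rw [e1] at hc
    have e2 : Multiset.card ((Finset.univ : Finset G).erase 1).val = Fintype.card G - 1 := by
      rw [← Finset.card_def, Finset.card_erase_of_mem (Finset.mem_univ 1), Finset.card_univ]
    rw [e2] at hc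
    exact hc.symm
end

section
/- Let A = {A_1, …, A_m} be a non-disjoint (n_a, m, k_a, λ_a)-PSEDF in a group G_a and let B = {B_1, …, B_m} be a non-disjoint (n_b, m, k_b, λ_b)-PSEDF in a group G_b. Then L = {A_i × B_i : 1 ≤ i ≤ m} is a non-disjoint (n_a n_b, m, k_a k_b, λ_a λ_b)-PSEDF in the direct product G_a × G_b. -/
lemma product_nsmul {α β : Type*} (n : ℕ) (s : Multiset α) (t : Multiset β) :
    s ×ˢ (n • t) = n • (s ×ˢ t) := by
  induction n with
  | zero => simp [Multiset.product_zero]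
  | succ k ih => rw [succ_nsmul, Multiset.product_add, ih, succ_nsmul]

lemma nsmul_product {α β : Type*} (m n : ℕ) (s : Multiset α) (t : Multiset β) :
    (m • s) ×ˢ (n • t) = (m * n) • (s ×ˢ t) := by
  induction m with
  | zero => simp [Multiset.zero_product]
  | succ k ih =>
      rw [succ_nsmul, Multiset.add_product, ih, product_nsmul, add_one_mul, add_nsmul]

lemma extDiff_prod {Ga Gb : Type*} [AddGroup Ga] [AddGroup Gb]
    (A C : Finset Ga) (B D : Finset Gb) :
    extDiff (A ×ˢ B) (C ×ˢ D) = (extDiff A C) ×ˢ (extDiff B D) := by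
  unfold extDiff
  rw [Finset.product_val, Finset.product_val]
  simp only [SProd.sprod, Multiset.product,
    Multiset.bind_assoc, Multiset.bind_map, Multiset.map_bind, Multiset.map_map,
    Function.comp_def, Prod.mk_sub_mk]
  refine Multiset.bind_congr fun a _ => ?_
  exact Multiset.bind_bind _ _

/-- if `{A₁,…,A_m}` is a non-disjoint `(n_a,m,k_a,λ_a)`-PSEDF in `G_a` and
`{B₁,…,B_m}` is a non-disjoint `(n_b,m,k_b,λ_b)`-PSEDF in `G_b`, then
`{Aᵢ × Bᵢ : 1 ≤ i ≤ m}` is a non-disjoint `(n_a n_b, m, k_a k_b, λ_a λ_b)`-PSEDF in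
`G_a × G_b`. -/
theorem stmt_18 {Ga Gb : Type*} [AddGroup Ga] [Fintype Ga] [DecidableEq Ga]
    [AddGroup Gb] [Fintype Gb] [DecidableEq Gb]
    (na nb m ka kb lama lamb : ℕ)
    (hna : Fintype.card Ga = na) (hnb : Fintype.card Gb = nb) (hm : 1 < m)
    (A : Fin m → Finset Ga) (B : Fin m → Finset Gb)
    (hAcard : ∀ i, (A i).card = ka) (hBcard : ∀ i, (B i).card = kb)
    (hA : ∀ i j, i ≠ j → extDiff (A i) (A j) = lama • (Finset.univ : Finset Ga).val)
    (hB : ∀ i j, i ≠ j → extDiff (B i) (B j) = lamb • (Finset.univ : Finset Gb).val) :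
    (∀ i, ((A i) ×ˢ (B i)).card = ka * kb) ∧
    ∀ i j, i ≠ j → extDiff ((A i) ×ˢ (B i)) ((A j) ×ˢ (B j))
      = (lama * lamb) • (Finset.univ : Finset (Ga × Gb)).val := by
  constructor
  · intro i; rw [Finset.card_product, hAcard, hBcard]
  · intro i j hij
    rw [extDiff_prod, hA i j hij, hB i j hij, nsmul_product,
      ← Finset.univ_product_univ, Finset.product_val]
end

section
/- Let h_1, h_2, h_3, h_4 ∈ ℕ (all ≥ 1) and set v = h_1h_2h_3h_4 + 1. In ℤ_v, define A = ⋃_{i=0}^{h_3−1} { i·h_1h_2 + α : 0 ≤ α ≤ h_1−1 } and B = ⋃_{i=0}^{h_4−1} { i·h_1h_2h_3 + h_1h_2(h_3−1) + β·h_1 : 1 ≤ β ≤ h_2 }. Then A and B are disjoint subsets of ℤ_v with |A| = h_1h_3 and |B| = h_2h_4, and Δ(A,B) = ℤ_v ∖ {0} as multisets (each nonzero element of ℤ_v occurs exactly once in Δ(A,B), and 0 does not occur); likewise Δ(B,A) = ℤ_v ∖ {0}. In particular {A, B} is a classical (h_1h_2h_3h_4 + 1, 2; h_1h_3, h_2h_4;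 1, 1)-GSEDF in ℤ_v. -/
private lemma digit_inj {m a b a' b' : ℕ} (ha : a < m) (ha' : a' < m)
    (h : a + m * b = a' + m * b') : a = a' ∧ b = b' := by
  have hm : 0 < m := Nat.pos_of_ne_zero (by omega)
  have h1 : a = a' := by
    have h2 := congrArg (· % m) h
    simpa [Nat.add_mul_mod_self_left, Nat.mod_eq_of_lt ha, Nat.mod_eq_of_lt ha'] using h2
  subst h1
  exact ⟨rfl, Nat.eq_of_mul_eq_mul_left hm (Nat.add_left_cancel h)⟩

private lemma digit_lt {a b m n : ℕ} (ha : a < m) (hb : b < n) : a + m * b < m * n :=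
  calc a + m * b < m + m * b := by omega
    _ = m * (b + 1) := by ring
    _ ≤ m * n := Nat.mul_le_mul le_rfl hb

private lemma cast_inj_of_lt {v : ℕ} [NeZero v] {a b : ℕ} (ha : a < v) (hb : b < v)
    (h : (a : ZMod v) = (b : ZMod v)) : a = b := by
  have h2 := congrArg ZMod.val h
  rwa [ZMod.val_cast_of_lt ha, ZMod.val_cast_of_lt hb] at h2

private lemma image_eq_range {γ : Type*} {s : Finset γ} {f : γ → ℕ} {m : ℕ}
    (hinj : Set.InjOn f s) (hcard : s.card = m) (hlt : ∀ x ∈ s, f x < m) :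
    s.image f = Finset.range m := by
  apply Finset.eq_of_subset_of_card_le
  · intro x hx
    obtain ⟨y, hy, rfl⟩ := Finset.mem_image.mp hx
    exact Finset.mem_range.mpr (hlt y hy)
  · rw [Finset.card_range, Finset.card_image_of_injOn hinj, hcard]

private lemma image_eq_erase_zero (m : ℕ) (g : ℕ → ZMod (m + 1))
    (hinj : Set.InjOn g (Finset.range m))
    (h0 : ∀ n < m, g n ≠ 0) :
    (Finset.range m).image g = (Finset.univ : Finset (ZMod (m + 1))).erase 0 := by
  apply Finset.eq_of_subset_of_card_le
  · intro x hx
    obtain ⟨n, hn, rfl⟩ := Finset.mem_image.mp hx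
    exact Finset.mem_erase.mpr ⟨h0 n (Finset.mem_range.mp hn), Finset.mem_univ _⟩
  · rw [Finset.card_erase_of_mem (Finset.mem_univ _), Finset.card_univ, ZMod.card,
      Finset.card_image_of_injOn hinj, Finset.card_range]
    omega

/-- let `h₁,h₂,h₃,h₄ ≥ 1` and `v = h₁h₂h₃h₄ + 1`.  In `ℤ_v`, the sets
`A = ⋃_{i<h₃} {i·h₁h₂ + α : 0 ≤ α ≤ h₁-1}` and
`B = ⋃_{i<h₄} {i·h₁h₂h₃ + h₁h₂(h₃-1) + β·h₁ : 1 ≤ β ≤ h₂}` are disjoint with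
`|A| = h₁h₃`, `|B| = h₂h₄`, and `Δ(A,B) = Δ(B,A) = ℤ_v∖{0}` as multisets (each nonzero
element occurring exactly once, and `0` not occurring); so `{A,B}` is a classical
`(h₁h₂h₃h₄+1, 2; h₁h₃, h₂h₄; 1, 1)`-GSEDF in `ℤ_v`. -/
theorem stmt_19 (h₁ h₂ h₃ h₄ : ℕ) (hh₁ : 1 ≤ h₁) (hh₂ : 1 ≤ h₂)
    (hh₃ : 1 ≤ h₃) (hh₄ : 1 ≤ h₄) :
    let v := h₁ * h₂ * h₃ * h₄ + 1
    let A : Finset (ZMod v) :=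
      ((Finset.range h₃) ×ˢ (Finset.range h₁)).image
        (fun p : ℕ × ℕ => ((p.1 * (h₁ * h₂) + p.2 : ℕ) : ZMod v))
    let B : Finset (ZMod v) :=
      ((Finset.range h₄) ×ˢ (Finset.range h₂)).image
        (fun p : ℕ × ℕ =>
          ((p.1 * (h₁ * h₂ * h₃) + h₁ * h₂ * (h₃ - 1) + (p.2 + 1) * h₁ : ℕ) : ZMod v))
    Disjoint A B ∧ A.card = h₁ * h₃ ∧ B.card = h₂ * h₄ ∧
      extDiff A B = ((Finset.univ : Finset (ZMod v)).erase 0).val ∧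
      extDiff B A = ((Finset.univ : Finset (ZMod v)).erase 0).val := by
  intro v A B
  haveI : NeZero v := ⟨Nat.succ_ne_zero _⟩
  set sA : Finset (ℕ × ℕ) := Finset.range h₃ ×ˢ Finset.range h₁ with hsA
  set sB : Finset (ℕ × ℕ) := Finset.range h₄ ×ˢ Finset.range h₂ with hsB
  set fA : ℕ × ℕ → ℕ := fun p => p.1 * (h₁ * h₂) + p.2 with hfA
  set fB : ℕ × ℕ → ℕ :=
    fun p => p.1 * (h₁ * h₂ * h₃) + h₁ * h₂ * (h₃ - 1) + (p.2 + 1) * h₁ with hfB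
  set N : (ℕ × ℕ) × (ℕ × ℕ) → ℕ :=
    fun pq => (h₁ - 1 - pq.1.2) + h₁ * (pq.2.2 + h₂ * ((h₃ - 1 - pq.1.1) + h₃ * pq.2.1))
    with hN
  have hA : A = sA.image (fun p => ((fA p : ℕ) : ZMod v)) := rfl
  have hB : B = sB.image (fun p => ((fB p : ℕ) : ZMod v)) := rfl
  have hvm : v = h₁ * h₂ * h₃ * h₄ + 1 := rfl
  set m := h₁ * h₂ * h₃ * h₄ with hm
  -- membership facts
  have memA : ∀ p : ℕ × ℕ, p ∈ sA ↔ p.1 < h₃ ∧ p.2 < h₁ := by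
    intro p; simp [hsA, Finset.mem_product]
  have memB : ∀ p : ℕ × ℕ, p ∈ sB ↔ p.1 < h₄ ∧ p.2 < h₂ := by
    intro p; simp [hsB, Finset.mem_product]
  -- bounds
  have hfAub : ∀ p ∈ sA, fA p < h₁ * h₂ * (h₃ - 1) + h₁ := by
    intro p hp
    obtain ⟨h1, h2⟩ := (memA p).mp hp
    have e1 : p.1 * (h₁ * h₂) ≤ (h₃ - 1) * (h₁ * h₂) :=
      Nat.mul_le_mul (by omega) le_rfl
    have e2 : (h₃ - 1) * (h₁ * h₂) = h₁ * h₂ * (h₃ - 1) := by ring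
    simp only [hfA]
    linarith
  have hfAlt : ∀ p ∈ sA, fA p < v := by
    intro p hp
    have h1 := hfAub p hp
    have e3 : h₁ * h₂ * (h₃ - 1) + h₁ ≤ h₁ * h₂ * h₃ := by
      have : h₁ * h₂ * (h₃ - 1) + h₁ * h₂ * 1 = h₁ * h₂ * h₃ := by
        rw [← Nat.mul_add]; congr 1; omega
      nlinarith
    have e4 : h₁ * h₂ * h₃ ≤ m := by
      calc h₁ * h₂ * h₃ = h₁ * h₂ * h₃ * 1 := by ring
        _ ≤ h₁ * h₂ * h₃ * h₄ := Nat.mul_le_mul le_rfl hh₄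
    rw [hvm]; omega
  have hfBlb : ∀ q ∈ sB, h₁ * h₂ * (h₃ - 1) + h₁ ≤ fB q := by
    intro q hq
    have e1 : h₁ ≤ (q.2 + 1) * h₁ := Nat.le_mul_of_pos_left h₁ (Nat.succ_pos _)
    have e2 : 0 ≤ q.1 * (h₁ * h₂ * h₃) := Nat.zero_le _
    simp only [hfB]
    linarith
  have hfBub : ∀ q ∈ sB, fB q < v := by
    intro q hq
    obtain ⟨h1, h2⟩ := (memB q).mp hq
    have e1 : q.1 * (h₁ * h₂ * h₃) ≤ (h₄ - 1) * (h₁ * h₂ * h₃) :=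
      Nat.mul_le_mul (by omega) le_rfl
    have e2 : (q.2 + 1) * h₁ ≤ h₂ * h₁ := Nat.mul_le_mul (by omega) le_rfl
    have e3 : (h₄ - 1) * (h₁ * h₂ * h₃) + h₁ * h₂ * (h₃ - 1) + h₂ * h₁ = m := by
      rw [hm]; zify [hh₃, hh₄]; ring
    have : fB q ≤ m := by simp only [hfB]; linarith
    rw [hvm]; omega
  -- injectivity of fA, fB as ℕ-valued maps
  have hfAinj : Set.InjOn fA sA := by
    intro p hp p' hp' h
    obtain ⟨h1, h2⟩ := (memA p).mp hp
    obtain ⟨h1', h2'⟩ := (memA p').mp hp'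
    have e : ∀ q : ℕ × ℕ, fA q = q.2 + (h₁ * h₂) * q.1 := fun q => by simp [hfA]; ring
    rw [e, e] at h
    have hle : h₁ ≤ h₁ * h₂ := Nat.le_mul_of_pos_right h₁ hh₂
    obtain ⟨ea, eb⟩ := digit_inj (by omega) (by omega) h
    exact Prod.ext eb ea
  have hfBinj : Set.InjOn fB sB := by
    intro q hq q' hq' h
    obtain ⟨h1, h2⟩ := (memB q).mp hq
    obtain ⟨h1', h2'⟩ := (memB q').mp hq'
    have e : ∀ r : ℕ × ℕ, fB r = (h₁ * h₂ * (h₃ - 1) + h₁) + h₁ * (r.2 + h₂ * (h₃ * r.1)) :=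
      fun r => by simp [hfB]; ring
    rw [e, e] at h
    have h' : q.2 + h₂ * (h₃ * q.1) = q'.2 + h₂ * (h₃ * q'.1) := by
      have := Nat.add_left_cancel h
      exact Nat.eq_of_mul_eq_mul_left (by omega) this
    obtain ⟨ea, eb⟩ := digit_inj h2 h2' h'
    have : q.1 = q'.1 := Nat.eq_of_mul_eq_mul_left (by omega) eb
    exact Prod.ext this ea
  -- ZMod-valued injectivity
  have hFAinj : Set.InjOn (fun p => ((fA p : ℕ) : ZMod v)) sA := by
    intro p hp p' hp' h
    exact hfAinj hp hp' (cast_inj_of_lt (hfAlt p hp) (hfAlt p' hp') h)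
  have hFBinj : Set.InjOn (fun q => ((fB q : ℕ) : ZMod v)) sB := by
    intro q hq q' hq' h
    exact hfBinj hq hq' (cast_inj_of_lt (hfBub q hq) (hfBub q' hq') h)
  -- disjointness
  have hdisj : Disjoint A B := by
    rw [Finset.disjoint_left]
    intro x hxA hxB
    rw [hA, Finset.mem_image] at hxA
    rw [hB, Finset.mem_image] at hxB
    obtain ⟨p, hp, rfl⟩ := hxA
    obtain ⟨q, hq, hEq⟩ := hxB
    have := cast_inj_of_lt (hfBub q hq) (hfAlt p hp) hEq
    have h1 := hfAub p hp
    have h2 := hfBlb q hq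
    omega
  -- cardinalities
  have hcardA : A.card = h₁ * h₃ := by
    rw [hA, Finset.card_image_of_injOn hFAinj, hsA, Finset.card_product,
      Finset.card_range, Finset.card_range, Nat.mul_comm]
  have hcardB : B.card = h₂ * h₄ := by
    rw [hB, Finset.card_image_of_injOn hFBinj, hsB, Finset.card_product,
      Finset.card_range, Finset.card_range, Nat.mul_comm]
  -- the key arithmetic identity
  have hkey : ∀ p ∈ sA, ∀ q ∈ sB, fA p + (N (p, q) + 1) = fB q := by
    intro p hp q hq
    obtain ⟨h1, h2⟩ := (memA p).mp hp
    simp only [hfA, hfB, hN]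
    zify [show p.2 ≤ h₁ - 1 by omega, show p.1 ≤ h₃ - 1 by omega, hh₁, hh₃]
    ring
  -- N is injective on sA ×ˢ sB and has image range m
  have hNlt : ∀ p ∈ sA, ∀ q ∈ sB, N (p, q) < m := by
    intro p hp q hq
    obtain ⟨h1, h2⟩ := (memA p).mp hp
    obtain ⟨h3, h4⟩ := (memB q).mp hq
    have inner : q.2 + h₂ * ((h₃ - 1 - p.1) + h₃ * q.1) < h₂ * (h₃ * h₄) :=
      digit_lt h4 (digit_lt (by omega) h3)
    have := digit_lt (show h₁ - 1 - p.2 < h₁ by omega) inner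
    calc N (p, q) < h₁ * (h₂ * (h₃ * h₄)) := this
      _ = m := by rw [hm]; ring
  have hNinj : Set.InjOn N ((sA ×ˢ sB) : Finset ((ℕ × ℕ) × (ℕ × ℕ))) := by
    intro x hx y hy h
    simp only [Finset.coe_product, Set.mem_prod, Finset.mem_coe] at hx hy
    obtain ⟨hx1, hx2⟩ := hx
    obtain ⟨hy1, hy2⟩ := hy
    obtain ⟨a1, a2⟩ := (memA x.1).mp hx1
    obtain ⟨a3, a4⟩ := (memB x.2).mp hx2
    obtain ⟨b1, b2⟩ := (memA y.1).mp hy1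
    obtain ⟨b3, b4⟩ := (memB y.2).mp hy2
    simp only [hN] at h
    obtain ⟨e0, e1⟩ := digit_inj (show h₁ - 1 - x.1.2 < h₁ by omega)
      (show h₁ - 1 - y.1.2 < h₁ by omega) h
    obtain ⟨e2, e3⟩ := digit_inj a4 b4 e1
    obtain ⟨e4, e5⟩ := digit_inj (show h₃ - 1 - x.1.1 < h₃ by omega)
      (show h₃ - 1 - y.1.1 < h₃ by omega) e3
    have j : x.2.1 = y.2.1 := e5
    have i : x.1.1 = y.1.1 := by omega
    have α : x.1.2 = y.1.2 := by omega
    exact Prod.ext (Prod.ext i α) (Prod.ext j e2)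
  have hcardAB : (sA ×ˢ sB).card = m := by
    rw [Finset.card_product, hsA, hsB, Finset.card_product, Finset.card_product,
      Finset.card_range, Finset.card_range, Finset.card_range, Finset.card_range, hm]
    ring
  have himN : (sA ×ˢ sB).image N = Finset.range m := by
    apply image_eq_range hNinj hcardAB
    intro x hx
    rw [Finset.mem_product] at hx
    exact hNlt x.1 hx.1 x.2 hx.2
  -- product val as bind
  have hprodval : ∀ (s t : Finset (ℕ × ℕ)),
      (s ×ˢ t).val = s.val.bind (fun p => t.val.map (Prod.mk p)) := by
    intro s t; rw [Finset.product_val]; rfl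
  -- the two multiset identities
  have hgneg : ∀ n < m, (-((n + 1 : ℕ) : ZMod v) : ZMod v) ≠ 0 ∧ ((n + 1 : ℕ) : ZMod v) ≠ 0 := by
    intro n hn
    have hne : ((n + 1 : ℕ) : ZMod v) ≠ 0 := by
      intro h
      have := congrArg ZMod.val h
      rw [ZMod.val_cast_of_lt (by rw [hvm]; omega)] at this
      simp at this
    exact ⟨neg_ne_zero.mpr hne, hne⟩
  have hcastinj : ∀ n ∈ Finset.range m, ∀ n' ∈ Finset.range m,
      ((n + 1 : ℕ) : ZMod v) = ((n' + 1 : ℕ) : ZMod v) → n = n' := by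
    intro n hn n' hn' h
    rw [Finset.mem_range] at hn hn'
    have := cast_inj_of_lt (a := n + 1) (b := n' + 1) (by rw [hvm]; omega) (by rw [hvm]; omega) h
    omega
  -- extDiff A B
  have hEDAB : extDiff A B =
      (sA ×ˢ sB).val.map (fun pq => (-((N pq + 1 : ℕ) : ZMod v) : ZMod v)) := by
    rw [hA, hB]
    show ((sA.image _).val.bind fun a => ((sB.image _).val.map fun b => a - b)) = _
    rw [Finset.image_val_of_injOn hFAinj, Finset.image_val_of_injOn hFBinj,
      hprodval, Multiset.map_bind, Multiset.bind_map]
    apply Multiset.bind_congr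
    intro p hp
    rw [Multiset.map_map, Multiset.map_map]
    apply Multiset.map_congr rfl
    intro q hq
    rw [Finset.mem_val] at hp hq
    have hk := hkey p hp q hq
    have hk' : ((fA p : ℕ) : ZMod v) + ((N (p, q) + 1 : ℕ) : ZMod v) = ((fB q : ℕ) : ZMod v) := by
      rw [← Nat.cast_add, hk]
    show ((fA p : ℕ) : ZMod v) - ((fB q : ℕ) : ZMod v) = -((N (p, q) + 1 : ℕ) : ZMod v)
    rw [← hk']; ring
  have hEDBA : extDiff B A =
      (sB ×ˢ sA).val.map (fun qp => ((N (qp.2, qp.1) + 1 : ℕ) : ZMod v)) := by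
    rw [hA, hB]
    show ((sB.image _).val.bind fun a => ((sA.image _).val.map fun b => a - b)) = _
    rw [Finset.image_val_of_injOn hFBinj, Finset.image_val_of_injOn hFAinj,
      hprodval, Multiset.map_bind, Multiset.bind_map]
    apply Multiset.bind_congr
    intro q hq
    rw [Multiset.map_map, Multiset.map_map]
    apply Multiset.map_congr rfl
    intro p hp
    rw [Finset.mem_val] at hp hq
    have hk := hkey p hp q hq
    have hk' : ((fA p : ℕ) : ZMod v) + ((N (p, q) + 1 : ℕ) : ZMod v) = ((fB q : ℕ) : ZMod v) := by
      rw [← Nat.cast_add, hk]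
    show ((fB q : ℕ) : ZMod v) - ((fA p : ℕ) : ZMod v) = ((N (p, q) + 1 : ℕ) : ZMod v)
    rw [← hk']; ring
  -- the target multiset, negative version
  have hTargNeg : ((Finset.univ : Finset (ZMod v)).erase 0).val =
      (sA ×ˢ sB).val.map (fun pq => (-((N pq + 1 : ℕ) : ZMod v) : ZMod v)) := by
    have hinjg : Set.InjOn (fun n : ℕ => (-((n + 1 : ℕ) : ZMod v) : ZMod v))
        (Finset.range m) := by
      intro n hn n' hn' h
      exact hcastinj n hn n' hn' (neg_inj.mp h)
    have h1 : (Finset.range m).image (fun n : ℕ => (-((n + 1 : ℕ) : ZMod v) : ZMod v)) =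
        (Finset.univ : Finset (ZMod v)).erase 0 := by
      exact image_eq_erase_zero m _ hinjg (fun n hn => (hgneg n hn).1)
    have hcomp : Set.InjOn (fun pq => (-((N pq + 1 : ℕ) : ZMod v) : ZMod v))
        ((sA ×ˢ sB) : Finset ((ℕ × ℕ) × (ℕ × ℕ))) := by
      intro x hx y hy h
      apply hNinj hx hy
      have hx' : x ∈ (sA ×ˢ sB) := hx
      have hy' : y ∈ (sA ×ˢ sB) := hy
      rw [Finset.mem_product] at hx' hy'
      have bx : N x < m := by
        have := hNlt x.1 hx'.1 x.2 hx'.2; simpa using this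
      have by' : N y < m := by
        have := hNlt y.1 hy'.1 y.2 hy'.2; simpa using this
      exact hcastinj _ (Finset.mem_range.mpr bx) _ (Finset.mem_range.mpr by') (neg_inj.mp h)
    rw [← h1, ← himN, Finset.image_image,
      Finset.image_val_of_injOn (by exact hcomp)]
    rfl
  have hTargPos : ((Finset.univ : Finset (ZMod v)).erase 0).val =
      (sB ×ˢ sA).val.map (fun qp => ((N (qp.2, qp.1) + 1 : ℕ) : ZMod v)) := by
    have hinjg : Set.InjOn (fun n : ℕ => ((n + 1 : ℕ) : ZMod v))
        (Finset.range m) := by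
      intro n hn n' hn' h
      exact hcastinj n hn n' hn' h
    have h1 : (Finset.range m).image (fun n : ℕ => ((n + 1 : ℕ) : ZMod v)) =
        (Finset.univ : Finset (ZMod v)).erase 0 := by
      exact image_eq_erase_zero m _ hinjg (fun n hn => (hgneg n hn).2)
    have hMinj : Set.InjOn (fun qp : (ℕ × ℕ) × (ℕ × ℕ) => N (qp.2, qp.1))
        ((sB ×ˢ sA) : Finset ((ℕ × ℕ) × (ℕ × ℕ))) := by
      intro x hx y hy h
      have hx' : x ∈ (sB ×ˢ sA) := hx
      have hy' : y ∈ (sB ×ˢ sA) := hy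
      rw [Finset.mem_product] at hx' hy'
      have hx2 : (x.2, x.1) ∈ (sA ×ˢ sB) := Finset.mem_product.mpr ⟨hx'.2, hx'.1⟩
      have hy2 : (y.2, y.1) ∈ (sA ×ˢ sB) := Finset.mem_product.mpr ⟨hy'.2, hy'.1⟩
      have := hNinj (Finset.mem_coe.mpr hx2) (Finset.mem_coe.mpr hy2) h
      have e1 : x.2 = y.2 := congrArg Prod.fst this
      have e2 : x.1 = y.1 := congrArg Prod.snd this
      exact Prod.ext e2 e1
    have himM : (sB ×ˢ sA).image (fun qp : (ℕ × ℕ) × (ℕ × ℕ) => N (qp.2, qp.1)) =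
        Finset.range m := by
      apply image_eq_range hMinj
      · rw [Finset.card_product, hsA, hsB, Finset.card_product, Finset.card_product,
          Finset.card_range, Finset.card_range, Finset.card_range, Finset.card_range, hm]
        ring
      · intro x hx
        rw [Finset.mem_product] at hx
        exact hNlt x.2 hx.2 x.1 hx.1
    have hcomp : Set.InjOn (fun qp : (ℕ × ℕ) × (ℕ × ℕ) => ((N (qp.2, qp.1) + 1 : ℕ) : ZMod v))
        ((sB ×ˢ sA) : Finset ((ℕ × ℕ) × (ℕ × ℕ))) := by
      intro x hx y hy h
      apply hMinj hx hy
      have hx' : x ∈ (sB ×ˢ sA) := hx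
      have hy' : y ∈ (sB ×ˢ sA) := hy
      rw [Finset.mem_product] at hx' hy'
      have bx : N (x.2, x.1) < m := hNlt x.2 hx'.2 x.1 hx'.1
      have by' : N (y.2, y.1) < m := hNlt y.2 hy'.2 y.1 hy'.1
      exact hcastinj _ (Finset.mem_range.mpr bx) _ (Finset.mem_range.mpr by') h
    rw [← h1, ← himM, Finset.image_image,
      Finset.image_val_of_injOn (by exact hcomp)]
    rfl
  exact ⟨hdisj, hcardA, hcardB, by rw [hEDAB, hTargNeg], by rw [hEDBA, hTargPos]⟩
end
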